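/- arXiv:2103.08124 — 7 statements merged into one kernel-verified Lean document; each statement's English description precedes it below -/
import Mathlib

section
/- Let d ≥ 1, let Ω be a skew-symmetric (d+1)×(d+1) real matrix and X : [0,∞) → ℝ^{d+1} continuous. Let x_k, x_l : [0,∞) → S^d be differentiable curves satisfying ẋ(t) = Ωx(t) + X(t) − ⟨x(t),X(t)⟩x(t) for all t ≥ 0. Then for every t ≥ 0, ‖x_k(t) − x_l(t)‖ = ‖x_k(0) − x_l(0)‖ · exp(−(1/2)∫₀ᵗ ⟨X(s), x_k(s) + x_l(s)⟩ ds). In particular, if x_k(0) ≠ x_l(0) then x_k(t) ≠ x_l(t) for all t ≥ 0. -/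
open MeasureTheory Metric Filter Matrix
open scoped RealInnerProductSpace

noncomputable abbrev Euc (d : ℕ) : Type := EuclideanSpace ℝ (Fin (d+1))

lemma skew_inner_self {n : ℕ} (Ω : Matrix (Fin n) (Fin n) ℝ) (hΩ : Ωᵀ = -Ω)
    (v : EuclideanSpace ℝ (Fin n)) : ⟪v, Matrix.toEuclideanLin Ω v⟫ = 0 := by
  have hv : ∀ i j, Ω i j = -Ω j i := by
    intro i j
    have := congrFun (congrFun hΩ j) i
    simpa [Matrix.transpose_apply] using this
  have key : ⟪v, Matrix.toEuclideanLin Ω v⟫ = ∑ i, ∑ j, v i * (Ω i j * v j) := by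
    simp [PiLp.inner_apply, Matrix.toEuclideanLin_apply, Matrix.mulVec, dotProduct,
      Finset.mul_sum]
    refine Finset.sum_congr rfl fun i _ => ?_; rw [Finset.sum_mul]
    exact Finset.sum_congr rfl fun j _ => by ring
  have h2 : ∑ i, ∑ j, v i * (Ω i j * v j) = -∑ i, ∑ j, v i * (Ω i j * v j) := by
    calc ∑ i, ∑ j, v i * (Ω i j * v j)
        = ∑ i, ∑ j, -(v j * (Ω j i * v i)) := by
          apply Finset.sum_congr rfl; intro i _
          apply Finset.sum_congr rfl; intro j _
          rw [hv i j]; ring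
      _ = -∑ i, ∑ j, v j * (Ω j i * v i) := by
          simp [Finset.sum_neg_distrib]
      _ = -∑ j, ∑ i, v j * (Ω j i * v i) := by rw [Finset.sum_comm]
      _ = -∑ i, ∑ j, v i * (Ω i j * v j) := rfl
  rw [key]; linarith

/-- For two solutions of the vector model on the sphere, the distance satisfies
the explicit exponential formula, hence collisionless. -/
theorem distance_formula_and_collisionless
    (d : ℕ) (hd : 1 ≤ d)
    (Ω : Matrix (Fin (d+1)) (Fin (d+1)) ℝ) (hΩ : Ωᵀ = -Ω)
    (X : ℝ → Euc d) (hX : ContinuousOn X (Set.Ici 0))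
    (xk xl : ℝ → Euc d)
    (hxkS : ∀ t ≥ (0:ℝ), ‖xk t‖ = 1) (hxlS : ∀ t ≥ (0:ℝ), ‖xl t‖ = 1)
    (hxk : ∀ t ≥ (0:ℝ), HasDerivWithinAt xk
      (Matrix.toEuclideanLin Ω (xk t) + X t - ⟪xk t, X t⟫ • xk t) (Set.Ici 0) t)
    (hxl : ∀ t ≥ (0:ℝ), HasDerivWithinAt xl
      (Matrix.toEuclideanLin Ω (xl t) + X t - ⟪xl t, X t⟫ • xl t) (Set.Ici 0) t) :
    (∀ t ≥ (0:ℝ), ‖xk t - xl t‖ = ‖xk 0 - xl 0‖ *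
        Real.exp (-(1/2) * ∫ s in (0:ℝ)..t, ⟪X s, xk s + xl s⟫)) ∧
    (xk 0 ≠ xl 0 → ∀ t ≥ (0:ℝ), xk t ≠ xl t) := by
  set g : ℝ → ℝ := fun s => ⟪X s, xk s + xl s⟫ with hg_def
  set G : ℝ → ℝ := fun t => ∫ s in (0:ℝ)..t, g s with hG_def
  set f : ℝ → ℝ := fun t => ⟪xk t - xl t, xk t - xl t⟫ with hf_def
  -- continuity facts
  have hxkC : ContinuousOn xk (Set.Ici 0) := fun t ht => (hxk t ht).continuousWithinAt
  have hxlC : ContinuousOn xl (Set.Ici 0) := fun t ht => (hxl t ht).continuousWithinAt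
  have hgC : ContinuousOn g (Set.Ici 0) := hX.inner (hxkC.add hxlC)
  have hfC : ContinuousOn f (Set.Ici 0) := (hxkC.sub hxlC).inner (hxkC.sub hxlC)
  -- derivative of f
  have hf' : ∀ t ≥ (0:ℝ), HasDerivWithinAt f (-(g t) * f t) (Set.Ici 0) t := by
    intro t ht
    have hu : HasDerivWithinAt (fun s => xk s - xl s)
        ((Matrix.toEuclideanLin Ω (xk t) + X t - ⟪xk t, X t⟫ • xk t)
          - (Matrix.toEuclideanLin Ω (xl t) + X t - ⟪xl t, X t⟫ • xl t)) (Set.Ici 0) t :=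
      (hxk t ht).sub (hxl t ht)
    have hd2 := (hu.inner ℝ hu : HasDerivWithinAt f _ (Set.Ici 0) t)
    convert hd2 using 1
    all_goals try rfl
    set a := ⟪xk t, X t⟫
    set b := ⟪xl t, X t⟫
    have hk1 : ⟪xk t, xk t⟫ = 1 := by
      rw [real_inner_self_eq_norm_sq, hxkS t ht]; norm_num
    have hl1 : ⟪xl t, xl t⟫ = 1 := by
      rw [real_inner_self_eq_norm_sq, hxlS t ht]; norm_num
    have hskew : ⟪xk t - xl t, Matrix.toEuclideanLin Ω (xk t - xl t)⟫ = 0 :=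
      skew_inner_self Ω hΩ _
    have hlin : Matrix.toEuclideanLin Ω (xk t - xl t)
        = Matrix.toEuclideanLin Ω (xk t) - Matrix.toEuclideanLin Ω (xl t) :=
      map_sub _ _ _
    rw [hlin] at hskew
    have hexp : ((Matrix.toEuclideanLin Ω (xk t) + X t - a • xk t)
          - (Matrix.toEuclideanLin Ω (xl t) + X t - b • xl t))
        = (Matrix.toEuclideanLin Ω (xk t) - Matrix.toEuclideanLin Ω (xl t))
          + (b • xl t - a • xk t) := by abel
    have hgt : g t = a + b := by
      simp only [hg_def, inner_add_right]
      rw [real_inner_comm (xk t) (X t), real_inner_comm (xl t) (X t)]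
    have hft : f t = 2 - 2 * ⟪xk t, xl t⟫ := by
      simp only [hf_def]
      rw [inner_sub_left, inner_sub_right, inner_sub_right, hk1, hl1,
        real_inner_comm (xk t) (xl t)]
      ring
    have hrest : ⟪xk t - xl t, b • xl t - a • xk t⟫
        = (a + b) * (⟪xk t, xl t⟫ - 1) := by
      rw [inner_sub_left, inner_sub_right, inner_sub_right,
        real_inner_smul_right, real_inner_smul_right, real_inner_smul_right,
        real_inner_smul_right, hk1, hl1, real_inner_comm (xk t) (xl t)]
      ring
    rw [hexp,
      real_inner_comm (xk t - xl t) ((Matrix.toEuclideanLin Ω (xk t) - Matrix.toEuclideanLin Ω (xl t))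
        + (b • xl t - a • xk t)),
      inner_add_right, hskew, hrest, hgt, hft]
    ring
  -- G facts
  have hgInt : ∀ t ≥ (0:ℝ), IntervalIntegrable g volume 0 t := by
    intro t ht
    apply ContinuousOn.intervalIntegrable
    apply hgC.mono
    rw [Set.uIcc_of_le ht]
    exact fun s hs => hs.1
  have hG' : ∀ t ≥ (0:ℝ), HasDerivWithinAt G (g t) (Set.Ici t) t := by
    intro t ht
    have hsub : Set.Ioi t ⊆ Set.Ici (0:ℝ) := fun s hs => le_trans ht (le_of_lt hs)
    exact intervalIntegral.integral_hasDerivWithinAt_right (t := Set.Ioi t) (hgInt t ht)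
      ((hgC.stronglyMeasurableAtFilter_nhdsWithin measurableSet_Ici t).filter_mono
        (nhdsWithin_mono t hsub))
      ((hgC t ht).mono hsub)
  have hGC : ∀ b ≥ (0:ℝ), ContinuousOn G (Set.Icc 0 b) := by
    intro b hb
    have huI : Set.uIcc (0:ℝ) b = Set.Icc 0 b := Set.uIcc_of_le hb
    rw [← huI]
    exact intervalIntegral.continuousOn_primitive_interval
      ((hgC.mono (by rw [huI]; exact fun s hs => hs.1)).integrableOn_compact
        (by rw [huI]; exact isCompact_Icc))
  -- key: f t * exp (G t) is constant
  have hkey : ∀ t ≥ (0:ℝ), f t * Real.exp (G t) = f 0 := by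
    intro b hb
    have hcont : ContinuousOn (fun t => f t * Real.exp (G t)) (Set.Icc 0 b) :=
      (hfC.mono (fun s hs => hs.1)).mul ((hGC b hb).rexp)
    have hderiv : ∀ t ∈ Set.Ico 0 b,
        HasDerivWithinAt (fun t => f t * Real.exp (G t)) 0 (Set.Ici t) t := by
      intro t ht
      have h1 : HasDerivWithinAt f (-(g t) * f t) (Set.Ici t) t :=
        (hf' t ht.1).mono (Set.Ici_subset_Ici.2 ht.1)
      have h2 : HasDerivWithinAt (fun s => Real.exp (G s)) (Real.exp (G t) * g t)
          (Set.Ici t) t := (Real.hasDerivAt_exp (G t)).comp_hasDerivWithinAt t (hG' t ht.1)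
      have h3 := h1.mul h2
      convert h3 using 1
      all_goals try rfl
      ring
    have hc := constant_of_has_deriv_right_zero hcont hderiv b
      (Set.mem_Icc.2 ⟨hb, le_refl b⟩)
    have hG0 : G 0 = 0 := intervalIntegral.integral_same
    rw [hG0] at hc
    simpa using hc
  have hf0 : f 0 = ‖xk 0 - xl 0‖ ^ 2 := by
    simp only [hf_def]
    exact real_inner_self_eq_norm_sq _
  have main : ∀ t ≥ (0:ℝ), ‖xk t - xl t‖ = ‖xk 0 - xl 0‖ *
      Real.exp (-(1/2) * G t) := by
    intro t ht
    have hft : f t = f 0 * Real.exp (-G t) := by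
      rw [Real.exp_neg, ← hkey t ht]
      field_simp
    have he : Real.exp (-(1/2) * G t) ^ 2 = Real.exp (-G t) := by
      rw [sq, ← Real.exp_add]; ring_nf
    have hsq : ‖xk t - xl t‖ ^ 2
        = (‖xk 0 - xl 0‖ * Real.exp (-(1/2) * G t)) ^ 2 := by
      rw [← real_inner_self_eq_norm_sq, mul_pow, he]
      rw [show ⟪xk t - xl t, xk t - xl t⟫ = f t from rfl, hft, hf0]
    have h1 : (0:ℝ) ≤ ‖xk t - xl t‖ := norm_nonneg _
    have h2 : (0:ℝ) ≤ ‖xk 0 - xl 0‖ * Real.exp (-(1/2) * G t) :=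
      mul_nonneg (norm_nonneg _) (Real.exp_pos _).le
    calc ‖xk t - xl t‖ = Real.sqrt (‖xk t - xl t‖ ^ 2) := (Real.sqrt_sq h1).symm
      _ = Real.sqrt ((‖xk 0 - xl 0‖ * Real.exp (-(1/2) * G t)) ^ 2) := by rw [hsq]
      _ = ‖xk 0 - xl 0‖ * Real.exp (-(1/2) * G t) := Real.sqrt_sq h2
  refine ⟨main, ?_⟩
  intro hne t ht hEq
  have hm := main t ht
  rw [hEq, sub_self, norm_zero] at hm
  have h0 : ‖xk 0 - xl 0‖ ≠ 0 := by
    simpa [sub_eq_zero] using hne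
  have hpos : 0 < ‖xk 0 - xl 0‖ * Real.exp (-(1/2) * G t) :=
    mul_pos (lt_of_le_of_ne (norm_nonneg _) (Ne.symm h0)) (Real.exp_pos _)
  linarith
end

section
/- Let d ≥ 1, k ≥ 2 an integer, Ω a skew-symmetric (d+1)×(d+1) real matrix and X : [0,∞) → ℝ^{d+1} continuous. Let x_1, …, x_{2k} : [0,∞) → S^d be differentiable curves each satisfying ẋ(t) = Ωx(t) + X(t) − ⟨x(t),X(t)⟩x(t), such that x_j(0) ≠ x_{j+1}(0) for j = 1,…,2k−1 and x_{2k}(0) ≠ x_1(0). Then C_k(x_1(t), …, x_{2k}(t)) = C_k(x_1(0), …, x_{2k}(0)) for all t ≥ 0. -/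
open MeasureTheory Metric Filter Matrix
open scoped RealInnerProductSpace

lemma skew_inner (d : ℕ) (Ω : Matrix (Fin (d+1)) (Fin (d+1)) ℝ) (hΩ : Ωᵀ = -Ω) (v : Euc d) :
    ⟪Matrix.toEuclideanLin Ω v, v⟫ = 0 := by
  have hct : Ωᴴ = -Ω := by
    rw [Matrix.conjTranspose]
    ext i j; simp [hΩ]
  have hadj : LinearMap.adjoint (Matrix.toEuclideanLin Ω) = -Matrix.toEuclideanLin Ω := by
    rw [← Matrix.toEuclideanLin_conjTranspose_eq_adjoint, hct, map_neg]
  have h := LinearMap.adjoint_inner_left (Matrix.toEuclideanLin Ω) v v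
  rw [hadj] at h
  simp only [LinearMap.neg_apply, inner_neg_left] at h
  have h2 : ⟪Matrix.toEuclideanLin Ω v, v⟫ = ⟪v, Matrix.toEuclideanLin Ω v⟫ := real_inner_comm _ _
  linarith [h, h2]

lemma pair_deriv (d : ℕ) (Ω : Matrix (Fin (d+1)) (Fin (d+1)) ℝ) (hΩ : Ωᵀ = -Ω)
    (X : ℝ → Euc d) (x y : ℝ → Euc d)
    (hx1 : ∀ t ≥ (0:ℝ), ‖x t‖ = 1) (hy1 : ∀ t ≥ (0:ℝ), ‖y t‖ = 1)
    (hx : ∀ t ≥ (0:ℝ), HasDerivWithinAt x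
      (Matrix.toEuclideanLin Ω (x t) + X t - ⟪x t, X t⟫ • x t) (Set.Ici 0) t)
    (hy : ∀ t ≥ (0:ℝ), HasDerivWithinAt y
      (Matrix.toEuclideanLin Ω (y t) + X t - ⟪y t, X t⟫ • y t) (Set.Ici 0) t)
    (t : ℝ) (ht : 0 ≤ t) :
    HasDerivWithinAt (fun u => ‖x u - y u‖ ^ 2)
      (-⟪x t + y t, X t⟫ * ‖x t - y t‖ ^ 2) (Set.Ici 0) t := by
  have hu : HasDerivWithinAt (fun u => x u - y u)
      ((Matrix.toEuclideanLin Ω (x t) + X t - ⟪x t, X t⟫ • x t)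
       - (Matrix.toEuclideanLin Ω (y t) + X t - ⟪y t, X t⟫ • y t)) (Set.Ici 0) t :=
    (hx t ht).sub (hy t ht)
  have hin := hu.inner ℝ hu
  have heq : (fun u => ‖x u - y u‖ ^ 2) = fun u => ⟪x u - y u, x u - y u⟫ := by
    funext u; rw [real_inner_self_eq_norm_sq]
  rw [heq]
  refine hin.congr_deriv ?_
  symm
  -- algebra
  set u := x t - y t with hudef
  have hskew : ⟪Matrix.toEuclideanLin Ω u, u⟫ = 0 := skew_inner d Ω hΩ u
  have hskew' : ⟪u, Matrix.toEuclideanLin Ω u⟫ = 0 := by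
    rw [real_inner_comm]; exact hskew
  have hxx : ⟪x t, x t⟫ = 1 := by
    rw [real_inner_self_eq_norm_sq, hx1 t ht]; norm_num
  have hyy : ⟪y t, y t⟫ = 1 := by
    rw [real_inner_self_eq_norm_sq, hy1 t ht]; norm_num
  have hnorm : ‖u‖ ^ 2 = ⟪u, u⟫ := (real_inner_self_eq_norm_sq u).symm
  have hΩsub : Matrix.toEuclideanLin Ω (x t) - Matrix.toEuclideanLin Ω (y t)
      = Matrix.toEuclideanLin Ω u := by rw [hudef, map_sub]
  have hrw : (Matrix.toEuclideanLin Ω (x t) + X t - ⟪x t, X t⟫ • x t)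
       - (Matrix.toEuclideanLin Ω (y t) + X t - ⟪y t, X t⟫ • y t)
       = Matrix.toEuclideanLin Ω u + (⟪y t, X t⟫ • y t - ⟪x t, X t⟫ • x t) := by
    rw [← hΩsub]; abel
  have hskew3 : ⟪Matrix.toEuclideanLin Ω (x t - y t), x t⟫
      - ⟪Matrix.toEuclideanLin Ω (x t - y t), y t⟫ = 0 := by
    rw [← inner_sub_right]; exact hskew
  rw [hrw]
  simp only [inner_add_left, inner_add_right, inner_sub_left, inner_sub_right,
    real_inner_smul_left, real_inner_smul_right, hskew, hskew', hudef, hxx, hyy]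
  rw [hnorm, hudef]
  simp only [inner_sub_left, inner_sub_right, hxx, hyy]
  have hcomm : ⟪y t, x t⟫ = ⟪x t, y t⟫ := real_inner_comm _ _
  have hc1 : ⟪X t, x t⟫ = ⟪x t, X t⟫ := real_inner_comm _ _
  have hc2 : ⟪X t, y t⟫ = ⟪y t, X t⟫ := real_inner_comm _ _
  simp only [hcomm, hc1, hc2]
  linear_combination -2 * hskew3 - real_inner_comm (Matrix.toEuclideanLin Ω (x t - y t)) (x t)
    + real_inner_comm (Matrix.toEuclideanLin Ω (x t - y t)) (y t)

lemma linODE_exp (v g : ℝ → ℝ) (hg : ContinuousOn g (Set.Ici 0))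
    (hv : ∀ t ≥ (0:ℝ), HasDerivWithinAt v (g t * v t) (Set.Ici 0) t) :
    ∀ t ≥ (0:ℝ), v t = v 0 * Real.exp (∫ s in (0:ℝ)..t, g s) := by
  intro t ht
  set G : ℝ → ℝ := fun u => ∫ s in (0:ℝ)..u, g s with hGdef
  set s : Set ℝ := Set.Icc 0 t with hsdef
  have hsub : s ⊆ Set.Ici 0 := Set.Icc_subset_Ici_self
  have hgs : ContinuousOn g s := hg.mono hsub
  have hGd : ∀ u ∈ s, HasDerivWithinAt G (g u) s u := by
    intro u hu
    haveI : Fact (u ∈ Set.Icc (0:ℝ) t) := ⟨hu⟩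
    have hint : IntervalIntegrable g volume 0 u := by
      apply (hg.mono _).intervalIntegrable
      rw [Set.uIcc_of_le hu.1]
      exact Set.Icc_subset_Ici_self
    exact intervalIntegral.integral_hasDerivWithinAt_right hint
      (hgs.stronglyMeasurableAtFilter_nhdsWithin measurableSet_Icc u)
      (hgs.continuousWithinAt hu)
  -- w = v * exp (-G) has derivative 0 on s
  have hw : ∀ u ∈ s, HasDerivWithinAt (fun u => v u * Real.exp (-G u))
      ((g u * v u) * Real.exp (-G u) + v u * (Real.exp (-G u) * -g u)) s u := by
    intro u hu
    exact ((hv u hu.1).mono hsub).mul (((hGd u hu).neg).exp)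
  have key := Convex.norm_image_sub_le_of_norm_hasDerivWithin_le
    (f := fun u => v u * Real.exp (-G u)) (C := 0) hw
    (fun u hu => by rw [show (g u * v u) * Real.exp (-G u) + v u * (Real.exp (-G u) * -g u) = 0 by ring]; simp)
    (convex_Icc 0 t) (Set.left_mem_Icc.mpr ht) (Set.right_mem_Icc.mpr ht)
  simp only [zero_mul, norm_le_zero_iff, sub_eq_zero] at key
  have hG0 : G 0 = 0 := intervalIntegral.integral_same
  rw [hG0] at key
  simp only [neg_zero, Real.exp_zero, mul_one] at key
  rw [← key]
  rw [mul_assoc, ← Real.exp_add]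
  simp [hGdef]


/-- the generalized cross ratio `C_k` along a cycle of length `2k` is a constant
of motion for the vector model on the sphere.  The curves are indexed `x 1, …, x (2k)` with the
convention `x (2k+1) = x 1`. -/
theorem Ck_constant_of_motion
    (d k : ℕ) (hd : 1 ≤ d) (hk : 2 ≤ k)
    (Ω : Matrix (Fin (d+1)) (Fin (d+1)) ℝ) (hΩ : Ωᵀ = -Ω)
    (X : ℝ → Euc d) (hX : ContinuousOn X (Set.Ici 0))
    (x : ℕ → ℝ → Euc d)
    (hper : x (2*k+1) = x 1)
    (hS : ∀ j, 1 ≤ j → j ≤ 2*k → ∀ t ≥ (0:ℝ), ‖x j t‖ = 1)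
    (hODE : ∀ j, 1 ≤ j → j ≤ 2*k → ∀ t ≥ (0:ℝ), HasDerivWithinAt (x j)
      (Matrix.toEuclideanLin Ω (x j t) + X t - ⟪x j t, X t⟫ • x j t) (Set.Ici 0) t)
    (hneq : ∀ j, 1 ≤ j → j ≤ 2*k - 1 → x j 0 ≠ x (j+1) 0)
    (hlast : x (2*k) 0 ≠ x 1 0) :
    ∀ t ≥ (0:ℝ),
      (∏ ℓ ∈ Finset.range k, ‖x (2*ℓ+1) t - x (2*ℓ+2) t‖ ^ 2 / ‖x (2*ℓ+2) t - x (2*ℓ+3) t‖ ^ 2)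
      = ∏ ℓ ∈ Finset.range k,
          ‖x (2*ℓ+1) 0 - x (2*ℓ+2) 0‖ ^ 2 / ‖x (2*ℓ+2) 0 - x (2*ℓ+3) 0‖ ^ 2 := by
  have hS2 : ∀ j, 1 ≤ j → j ≤ 2*k+1 → ∀ t ≥ (0:ℝ), ‖x j t‖ = 1 := by
    intro j h1 h2 t ht
    rcases Nat.lt_or_ge j (2*k+1) with h | h
    · exact hS j h1 (by omega) t ht
    · have hj : j = 2*k+1 := by omega
      rw [hj, hper]; exact hS 1 le_rfl (by omega) t ht
  have hODE2 : ∀ j, 1 ≤ j → j ≤ 2*k+1 → ∀ t ≥ (0:ℝ), HasDerivWithinAt (x j)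
      (Matrix.toEuclideanLin Ω (x j t) + X t - ⟪x j t, X t⟫ • x j t) (Set.Ici 0) t := by
    intro j h1 h2 t ht
    rcases Nat.lt_or_ge j (2*k+1) with h | h
    · exact hODE j h1 (by omega) t ht
    · have hj : j = 2*k+1 := by omega
      rw [hj, hper]; exact hODE 1 le_rfl (by omega) t ht
  have hcont : ∀ j, 1 ≤ j → j ≤ 2*k+1 → ContinuousOn (x j) (Set.Ici 0) :=
    fun j h1 h2 t ht => (hODE2 j h1 h2 t ht).continuousWithinAt
  set g : ℕ → ℝ → ℝ := fun j t => -⟪x j t + x (j+1) t, X t⟫ with hgdef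
  have hgcont : ∀ j, 1 ≤ j → j ≤ 2*k → ContinuousOn (g j) (Set.Ici 0) := by
    intro j h1 h2
    exact (ContinuousOn.inner ((hcont j h1 (by omega)).add (hcont (j+1) (by omega) (by omega))) hX).neg
  have key : ∀ j, 1 ≤ j → j ≤ 2*k → ∀ t ≥ (0:ℝ),
      ‖x j t - x (j+1) t‖^2 = ‖x j 0 - x (j+1) 0‖^2 * Real.exp (∫ s in (0:ℝ)..t, g j s) := by
    intro j h1 h2
    exact linODE_exp _ _ (hgcont j h1 h2)
      (fun t ht => pair_deriv d Ω hΩ X (x j) (x (j+1)) (hS2 j h1 (by omega))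
        (hS2 (j+1) (by omega) (by omega)) (hODE2 j h1 (by omega))
        (hODE2 (j+1) (by omega) (by omega)) t ht)
  intro t ht
  have hint : ∀ j, 1 ≤ j → j ≤ 2*k → IntervalIntegrable (g j) volume 0 t := by
    intro j h1 h2
    apply ((hgcont j h1 h2).mono _).intervalIntegrable
    rw [Set.uIcc_of_le ht]; exact Set.Icc_subset_Ici_self
  set I : ℕ → ℝ := fun j => ∫ s in (0:ℝ)..t, g j s with hIdef
  have hterm : ∀ ℓ ∈ Finset.range k,
      ‖x (2*ℓ+1) t - x (2*ℓ+2) t‖^2 / ‖x (2*ℓ+2) t - x (2*ℓ+3) t‖^2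
      = (‖x (2*ℓ+1) 0 - x (2*ℓ+2) 0‖^2 / ‖x (2*ℓ+2) 0 - x (2*ℓ+3) 0‖^2)
        * Real.exp (I (2*ℓ+1) - I (2*ℓ+2)) := by
    intro ℓ hℓ
    have hℓk : ℓ < k := Finset.mem_range.mp hℓ
    have e1 := key (2*ℓ+1) (by omega) (by omega) t ht
    have e2 := key (2*ℓ+2) (by omega) (by omega) t ht
    rw [show (2*ℓ+1)+1 = 2*ℓ+2 from rfl] at e1
    rw [show (2*ℓ+2)+1 = 2*ℓ+3 from rfl] at e2
    rw [e1, e2, mul_div_mul_comm, Real.exp_sub]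
  rw [Finset.prod_congr rfl hterm, Finset.prod_mul_distrib, ← Real.exp_sum]
  have hsum : ∑ ℓ ∈ Finset.range k, (I (2*ℓ+1) - I (2*ℓ+2)) = 0 := by
    have hstep : ∀ ℓ ∈ Finset.range k, I (2*ℓ+1) - I (2*ℓ+2)
        = ∫ s in (0:ℝ)..t, (g (2*ℓ+1) s - g (2*ℓ+2) s) := by
      intro ℓ hℓ
      have hℓk := Finset.mem_range.mp hℓ
      rw [intervalIntegral.integral_sub (hint (2*ℓ+1) (by omega) (by omega))
        (hint (2*ℓ+2) (by omega) (by omega))]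
    rw [Finset.sum_congr rfl hstep, ← intervalIntegral.integral_finset_sum]
    · have hz : ∀ s : ℝ, ∑ ℓ ∈ Finset.range k, (g (2*ℓ+1) s - g (2*ℓ+2) s) = 0 := by
        intro s
        have hptw : ∀ ℓ, g (2*ℓ+1) s - g (2*ℓ+2) s
            = ⟪x (2*(ℓ+1)+1) s, X s⟫ - ⟪x (2*ℓ+1) s, X s⟫ := by
          intro ℓ
          simp only [hgdef]
          rw [show 2*(ℓ+1)+1 = 2*ℓ+3 by ring]
          rw [show (2*ℓ+1)+1 = 2*ℓ+2 from rfl, show (2*ℓ+2)+1 = 2*ℓ+3 from rfl]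
          simp only [inner_add_left]
          ring
        simp only [hptw]
        rw [Finset.sum_range_sub (f := fun ℓ => ⟪x (2*ℓ+1) s, X s⟫)]
        simp [hper]
      simp only [hz, intervalIntegral.integral_zero]
    · intro ℓ hℓ
      have hℓk := Finset.mem_range.mp hℓ
      exact (hint (2*ℓ+1) (by omega) (by omega)).sub (hint (2*ℓ+2) (by omega) (by omega))
  rw [hsum, Real.exp_zero, mul_one]
end

section
/- Let d ≥ 1, let Ω be a skew-symmetric (d+1)×(d+1) real matrix and X : [0,∞) → ℝ^{d+1} continuous. Suppose w : [0,∞) → ℝ^{d+1} is differentiable with w(0) = 0, ẇ(t) = Ωw(t) + (1/2)(1+‖w(t)‖²)X(t) − ⟨w(t),X(t)⟩w(t), and ‖w(t)‖ < 1 for all t ≥ 0; and suppose R : [0,∞) → ℝ^{(d+1)×(d+1)} is differentiable with R(0) = I and Ṙ(t) = (Ω + X(t)w(t)ᵀ − w(t)X(t)ᵀ)R(t). Then R(t) is an orthogonal matrix for every t ≥ 0, and for each x ∈ S^d the curve m(t) := w(t) + (R(t)x + w(t))(1 − ‖w(t)‖²)/‖R(t)x + w(t)‖² satisfies m(0) =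 x, m(t) ∈ S^d for all t ≥ 0, and ṁ(t) = Ωm(t) + X(t) − ⟨m(t), X(t)⟩m(t) for all t ≥ 0. -/
set_option maxHeartbeats 1000000

open MeasureTheory Metric Filter Matrix
open scoped RealInnerProductSpace

section Aux

variable {n : ℕ}

lemma euc_apply (M : Matrix (Fin n) (Fin n) ℝ) (v : EuclideanSpace ℝ (Fin n)) (i : Fin n) :
    Matrix.toEuclideanLin M v i = ∑ j, M i j * v j := by
  simp [Matrix.toEuclideanLin_apply, Matrix.mulVec, dotProduct]

lemma euc_inner (a b : EuclideanSpace ℝ (Fin n)) : ⟪a, b⟫ = ∑ i, a i * b i := by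
  simp [PiLp.inner_apply, RCLike.inner_apply, starRingEnd_apply]
  exact Finset.sum_congr rfl fun _ _ => mul_comm _ _

lemma euc_mul (M N : Matrix (Fin n) (Fin n) ℝ) (v : EuclideanSpace ℝ (Fin n)) :
    Matrix.toEuclideanLin (M * N) v = Matrix.toEuclideanLin M (Matrix.toEuclideanLin N v) := by
  ext i
  simp only [euc_apply, Matrix.mul_apply, Finset.sum_mul, Finset.mul_sum]
  rw [Finset.sum_comm]
  congr 1; ext j; congr 1; ext k; ring

lemma euc_adj (M : Matrix (Fin n) (Fin n) ℝ) (a b : EuclideanSpace ℝ (Fin n)) :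
    ⟪Matrix.toEuclideanLin M a, b⟫ = ⟪a, Matrix.toEuclideanLin Mᵀ b⟫ := by
  simp only [euc_inner, euc_apply, Matrix.transpose_apply, Finset.sum_mul, Finset.mul_sum]
  rw [Finset.sum_comm]
  congr 1; ext j; congr 1; ext k; ring

lemma euc_rank_one (a b v : EuclideanSpace ℝ (Fin n)) :
    Matrix.toEuclideanLin (Matrix.of fun i j => a i * b j) v = ⟪b, v⟫ • a := by
  ext i
  simp only [euc_apply, Matrix.of_apply, euc_inner, PiLp.smul_apply, smul_eq_mul]
  rw [Finset.sum_mul]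
  congr 1; ext j; ring

lemma euc_one (v : EuclideanSpace ℝ (Fin n)) : Matrix.toEuclideanLin 1 v = v := by
  ext i
  simp [euc_apply, Matrix.one_apply]

lemma hasDerivWithinAt_euc {f : ℝ → EuclideanSpace ℝ (Fin n)} {f' : EuclideanSpace ℝ (Fin n)}
    {s : Set ℝ} {t : ℝ} (h : ∀ i, HasDerivWithinAt (fun τ => f τ i) (f' i) s t) :
    HasDerivWithinAt f f' s t := by
  let e := EuclideanSpace.equiv (Fin n) ℝ
  have h1 : HasDerivWithinAt (fun τ => (e (f τ) : Fin n → ℝ)) (e f') s t :=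
    hasDerivWithinAt_pi.2 h
  have h2 := ((e.symm : (Fin n → ℝ) →L[ℝ] EuclideanSpace ℝ (Fin n)).hasFDerivAt).comp_hasDerivWithinAt t h1
  have h3 : (⇑(e.symm : (Fin n → ℝ) →L[ℝ] EuclideanSpace ℝ (Fin n)) ∘ fun τ => e (f τ)) = f := by
    funext τ; simp [e]
  have h4 : (e.symm : (Fin n → ℝ) →L[ℝ] EuclideanSpace ℝ (Fin n)) (e f') = f' := by simp [e]
  rw [h3, h4] at h2
  exact h2

end Aux

section Key

variable {E : Type*} [NormedAddCommGroup E] [InnerProductSpace ℝ E]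

lemma key_norm (v w : E) (hvn : ⟪v, v⟫ = 1)
    (hne : (1:ℝ) + 2 * ⟪w, v⟫ + ⟪w, w⟫ ≠ 0) :
    ⟪w + ((1 - ⟪w, w⟫) / ⟪v + w, v + w⟫) • (v + w),
      w + ((1 - ⟪w, w⟫) / ⟪v + w, v + w⟫) • (v + w)⟫ = 1 := by
  have h1 : ⟪v, w⟫ = ⟪w, v⟫ := real_inner_comm w v
  have hq : ⟪v + w, v + w⟫ = 1 + 2 * ⟪w, v⟫ + ⟪w, w⟫ := by
    simp only [inner_add_left, inner_add_right, hvn, h1]; ring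
  simp only [inner_add_left, inner_add_right, real_inner_smul_left, real_inner_smul_right, hq,
    hvn, h1]
  field_simp
  ring

lemma key_deriv (L : E →ₗ[ℝ] E) (hL : ∀ y : E, ⟪y, L y⟫ = 0)
    (X0 : E) (w v : ℝ → E) (s : Set ℝ) (t : ℝ)
    (hw : HasDerivWithinAt w
      (L (w t) + ((1/2) * (1 + ⟪w t, w t⟫)) • X0 - ⟪w t, X0⟫ • w t) s t)
    (hv : HasDerivWithinAt v
      (L (v t) + ⟪w t, v t⟫ • X0 - ⟪X0, v t⟫ • w t) s t)
    (hvn : ⟪v t, v t⟫ = 1)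
    (hne : (1:ℝ) + 2 * ⟪w t, v t⟫ + ⟪w t, w t⟫ ≠ 0) :
    HasDerivWithinAt
      (fun τ => w τ + ((1 - ⟪w τ, w τ⟫) / ⟪v τ + w τ, v τ + w τ⟫) • (v τ + w τ))
      (L (w t + ((1 - ⟪w t, w t⟫) / ⟪v t + w t, v t + w t⟫) • (v t + w t)) + X0
        - ⟪w t + ((1 - ⟪w t, w t⟫) / ⟪v t + w t, v t + w t⟫) • (v t + w t), X0⟫ •
          (w t + ((1 - ⟪w t, w t⟫) / ⟪v t + w t, v t + w t⟫) • (v t + w t))) s t := by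
  have h1 : ⟪v t, w t⟫ = ⟪w t, v t⟫ := real_inner_comm (w t) (v t)
  have h2 : ⟪X0, w t⟫ = ⟪w t, X0⟫ := real_inner_comm (w t) X0
  have h3 : ⟪v t, X0⟫ = ⟪X0, v t⟫ := real_inner_comm X0 (v t)
  have hLw : ⟪w t, L (w t)⟫ = 0 := hL _
  have hLv : ⟪v t, L (v t)⟫ = 0 := hL _
  have hLw' : ⟪L (w t), w t⟫ = 0 := by rw [← real_inner_comm]; exact hLw
  have hLv' : ⟪L (v t), v t⟫ = 0 := by rw [← real_inner_comm]; exact hLv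
  have hvw : ⟪v t, L (w t)⟫ = -⟪w t, L (v t)⟫ := by
    have h := hL (v t + w t)
    simp only [map_add, inner_add_left, inner_add_right, hLw, hLv] at h
    linarith
  have hvw' : ⟪L (w t), v t⟫ = -⟪w t, L (v t)⟫ := by
    rw [← real_inner_comm]; exact hvw
  have hwv' : ⟪L (v t), w t⟫ = ⟪w t, L (v t)⟫ := real_inner_comm _ _
  have hq : ⟪v t + w t, v t + w t⟫ = 1 + 2 * ⟪w t, v t⟫ + ⟪w t, w t⟫ := by
    simp only [inner_add_left, inner_add_right, hvn, h1]; ring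
  have hu := hv.fun_add hw
  have hsw : HasDerivWithinAt (fun τ => ⟪w τ, w τ⟫)
      ((1 - ⟪w t, w t⟫) * ⟪w t, X0⟫) s t := by
    refine (hw.inner ℝ hw).congr_deriv ?_
    simp only [inner_add_left, inner_add_right, inner_sub_left, inner_sub_right,
      real_inner_smul_left, real_inner_smul_right, hLw, hLw', h2]
    ring
  have hsu : HasDerivWithinAt (fun τ => ⟪v τ + w τ, v τ + w τ⟫)
      ((1 - ⟪w t, w t⟫) * (⟪X0, v t⟫ + ⟪w t, X0⟫)) s t := by
    refine (hu.inner ℝ hu).congr_deriv ?_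
    simp only [inner_add_left, inner_add_right, inner_sub_left, inner_sub_right,
      real_inner_smul_left, real_inner_smul_right, hLw, hLv, hLw', hLv', hvw, hvw', hwv',
      h1, h2, h3, hvn]
    ring
  have hnum := (hasDerivWithinAt_const t s (1:ℝ)).fun_sub hsw
  have hcoef := hnum.fun_div hsu (by rw [hq]; exact hne)
  have hD := hw.fun_add (hcoef.fun_smul hu)
  convert hD using 1
  simp only [hq]
  simp only [map_add, _root_.map_smul, inner_add_left, inner_add_right, real_inner_smul_left,
    real_inner_smul_right, hvn, h1, h2, h3, hLw, hLv, hLw', hLv', hvw, hvw', hwv']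
  match_scalars <;> field_simp [hne] <;> ring

end Key

/-- if `w` solves the Riccati-type equation and `R` solves the linear matrix
equation of the Watanabe–Strogatz transform, then `R(t)` is orthogonal for all `t ≥ 0` and,
for every point `x` of the sphere, the curve
`m(t) = w(t) + (R(t)x + w(t))(1 − ‖w(t)‖²)/‖R(t)x + w(t)‖²` starts at `x`, stays on the
sphere, and solves the vector model. -/
theorem ws_transform_solves_vector_model
    (d : ℕ) (hd : 1 ≤ d)
    (Ω : Matrix (Fin (d+1)) (Fin (d+1)) ℝ) (hΩ : Ωᵀ = -Ω)
    (X : ℝ → Euc d) (hX : ContinuousOn X (Set.Ici 0))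
    (w : ℝ → Euc d) (hw0 : w 0 = 0) (hwlt : ∀ t ≥ (0:ℝ), ‖w t‖ < 1)
    (hw : ∀ t ≥ (0:ℝ), HasDerivWithinAt w
      (Matrix.toEuclideanLin Ω (w t) + ((1/2) * (1 + ‖w t‖ ^ 2)) • X t
        - ⟪w t, X t⟫ • w t) (Set.Ici 0) t)
    (R : ℝ → Matrix (Fin (d+1)) (Fin (d+1)) ℝ) (hR0 : R 0 = 1)
    (hR : ∀ t ≥ (0:ℝ), ∀ i j, HasDerivWithinAt (fun s => R s i j)
      (((Ω + Matrix.of (fun i j => X t i * w t j)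
          - Matrix.of (fun i j => w t i * X t j)) * R t) i j) (Set.Ici 0) t) :
    (∀ t ≥ (0:ℝ), R t * (R t)ᵀ = 1) ∧
    ∀ x : Euc d, ‖x‖ = 1 →
      ∀ m : ℝ → Euc d,
        (m = fun t => w t +
          ((1 - ‖w t‖ ^ 2) / ‖Matrix.toEuclideanLin (R t) x + w t‖ ^ 2) •
            (Matrix.toEuclideanLin (R t) x + w t)) →
        m 0 = x ∧ (∀ t ≥ (0:ℝ), ‖m t‖ = 1) ∧
        ∀ t ≥ (0:ℝ), HasDerivWithinAt m
          (Matrix.toEuclideanLin Ω (m t) + X t - ⟪m t, X t⟫ • m t) (Set.Ici 0) t := by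
  set A : ℝ → Matrix (Fin (d+1)) (Fin (d+1)) ℝ := fun τ =>
    Ω + Matrix.of (fun i j => X τ i * w τ j) - Matrix.of (fun i j => w τ i * X τ j) with hA
  have hAskew : ∀ τ, (A τ)ᵀ = -(A τ) := by
    intro τ
    ext i j
    have h := congrFun (congrFun hΩ i) j
    simp only [Matrix.transpose_apply, Matrix.neg_apply] at h
    simp only [hA, Matrix.transpose_apply, Matrix.neg_apply, Matrix.sub_apply, Matrix.add_apply,
      Matrix.of_apply]
    rw [h]; ring
  -- orthogonality
  have horth : ∀ t ≥ (0:ℝ), (R t)ᵀ * R t = 1 := by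
    intro t ht
    have hderiv : ∀ i j, ∀ τ ≥ (0:ℝ),
        HasDerivWithinAt (fun τ => ∑ k, R τ k i * R τ k j) 0 (Set.Ici 0) τ := by
      intro i j τ hτ
      have h1 : HasDerivWithinAt (fun τ => ∑ k, R τ k i * R τ k j)
          (∑ k, ((A τ * R τ) k i * R τ k j + R τ k i * (A τ * R τ) k j)) (Set.Ici 0) τ :=
        HasDerivWithinAt.fun_sum fun k _ => (hR τ hτ k i).mul (hR τ hτ k j)
      have h3 : (A τ * R τ)ᵀ * R τ + (R τ)ᵀ * (A τ * R τ) = 0 := by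
        rw [Matrix.transpose_mul, hAskew τ]
        noncomm_ring
      have h2 : (∑ k, ((A τ * R τ) k i * R τ k j + R τ k i * (A τ * R τ) k j)) = 0 := by
        calc (∑ k, ((A τ * R τ) k i * R τ k j + R τ k i * (A τ * R τ) k j))
            = ((A τ * R τ)ᵀ * R τ + (R τ)ᵀ * (A τ * R τ)) i j := by
              rw [Matrix.add_apply, Matrix.mul_apply, Matrix.mul_apply,
                ← Finset.sum_add_distrib]
              exact Finset.sum_congr rfl fun k _ => by simp [Matrix.transpose_apply]
          _ = 0 := by rw [h3]; simp
      exact h2 ▸ h1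
    ext i j
    have hconst := constant_of_has_deriv_right_zero
      (f := fun τ => ∑ k, R τ k i * R τ k j) (a := 0) (b := t)
      (fun τ hτ => ((hderiv i j τ hτ.1).continuousWithinAt).mono
        (fun y (hy : y ∈ Set.Icc (0:ℝ) t) => hy.1))
      (fun τ hτ => (hderiv i j τ hτ.1).mono (Set.Ici_subset_Ici.2 hτ.1))
      t (Set.right_mem_Icc.2 ht)
    simp only [hR0] at hconst
    rw [Matrix.mul_apply]
    simp only [Matrix.transpose_apply]
    rw [hconst]
    simp [Matrix.one_apply, eq_comm]
  refine ⟨fun t ht => mul_eq_one_comm.mp (horth t ht), ?_⟩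
  intro x hx m hm
  have hL : ∀ y : Euc d, ⟪y, Matrix.toEuclideanLin Ω y⟫ = 0 := by
    intro y
    have h := euc_adj Ω y y
    rw [hΩ, map_neg] at h
    simp only [LinearMap.neg_apply, inner_neg_right] at h
    have h2 := real_inner_comm y (Matrix.toEuclideanLin Ω y)
    linarith
  have hvn : ∀ t ≥ (0:ℝ), ⟪Matrix.toEuclideanLin (R t) x, Matrix.toEuclideanLin (R t) x⟫ = 1 := by
    intro t ht
    rw [euc_adj, ← euc_mul, horth t ht, euc_one, real_inner_self_eq_norm_sq, hx]
    norm_num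
  have hRxnorm : ∀ t ≥ (0:ℝ), ‖Matrix.toEuclideanLin (R t) x‖ = 1 := by
    intro t ht
    have h := hvn t ht
    rw [real_inner_self_eq_norm_sq] at h
    nlinarith [norm_nonneg (Matrix.toEuclideanLin (R t) x)]
  have hupos : ∀ t ≥ (0:ℝ), (0:ℝ) < ‖Matrix.toEuclideanLin (R t) x + w t‖ := by
    intro t ht
    have h1 : ‖Matrix.toEuclideanLin (R t) x‖
        ≤ ‖Matrix.toEuclideanLin (R t) x + w t‖ + ‖w t‖ := by
      calc ‖Matrix.toEuclideanLin (R t) x‖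
          = ‖(Matrix.toEuclideanLin (R t) x + w t) - w t‖ := by rw [add_sub_cancel_right]
        _ ≤ _ := norm_sub_le _ _
    have := hwlt t ht
    have := hRxnorm t ht
    linarith
  have hq : ∀ t ≥ (0:ℝ),
      ⟪Matrix.toEuclideanLin (R t) x + w t, Matrix.toEuclideanLin (R t) x + w t⟫
        = 1 + 2 * ⟪w t, Matrix.toEuclideanLin (R t) x⟫ + ⟪w t, w t⟫ := by
    intro t ht
    simp only [inner_add_left, inner_add_right, hvn t ht,
      real_inner_comm (w t) (Matrix.toEuclideanLin (R t) x)]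
    ring
  have hne : ∀ t ≥ (0:ℝ),
      (1:ℝ) + 2 * ⟪w t, Matrix.toEuclideanLin (R t) x⟫ + ⟪w t, w t⟫ ≠ 0 := by
    intro t ht
    rw [← hq t ht, real_inner_self_eq_norm_sq]
    exact pow_ne_zero 2 (ne_of_gt (hupos t ht))
  -- the function in inner-product form
  have hmfun : m = fun τ => w τ +
      ((1 - ⟪w τ, w τ⟫) / ⟪Matrix.toEuclideanLin (R τ) x + w τ,
        Matrix.toEuclideanLin (R τ) x + w τ⟫) •
      (Matrix.toEuclideanLin (R τ) x + w τ) := by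
    rw [hm]
    funext τ
    simp only [real_inner_self_eq_norm_sq]
  refine ⟨?_, ?_, ?_⟩
  · rw [hm]
    simp [hw0, hR0, euc_one, hx]
  · intro t ht
    have h := key_norm (Matrix.toEuclideanLin (R t) x) (w t) (hvn t ht) (hne t ht)
    have hmt : ⟪m t, m t⟫ = 1 := by rw [hmfun]; exact h
    rw [real_inner_self_eq_norm_sq] at hmt
    nlinarith [norm_nonneg (m t)]
  · intro t ht
    have hw' : HasDerivWithinAt w
        (Matrix.toEuclideanLin Ω (w t) + ((1/2) * (1 + ⟪w t, w t⟫)) • X t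
          - ⟪w t, X t⟫ • w t) (Set.Ici 0) t := by
      have h := hw t ht
      rw [← real_inner_self_eq_norm_sq] at h
      exact h
    have hvd : HasDerivWithinAt (fun τ => Matrix.toEuclideanLin (R τ) x)
        (Matrix.toEuclideanLin (A t * R t) x) (Set.Ici 0) t := by
      apply hasDerivWithinAt_euc
      intro i
      have hsum := HasDerivWithinAt.fun_sum (u := Finset.univ)
        (fun j (_ : j ∈ Finset.univ) => (hR t ht i j).mul_const (x j))
      simpa only [euc_apply] using hsum
    have hveq : Matrix.toEuclideanLin (A t * R t) x
        = Matrix.toEuclideanLin Ω (Matrix.toEuclideanLin (R t) x)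
          + ⟪w t, Matrix.toEuclideanLin (R t) x⟫ • X t
          - ⟪X t, Matrix.toEuclideanLin (R t) x⟫ • w t := by
      rw [euc_mul, hA]
      simp only [map_add, map_sub, LinearMap.add_apply, LinearMap.sub_apply, euc_rank_one]
    rw [hveq] at hvd
    have hkey := key_deriv (Matrix.toEuclideanLin Ω) hL (X t) w
      (fun τ => Matrix.toEuclideanLin (R τ) x) (Set.Ici 0) t hw' hvd (hvn t ht) (hne t ht)
    rw [hmfun]
    exact hkey
end

section
/- Let d ≥ 1, let μ be a Borel probability measure on S^d such that (μ⊗μ)({(x,y) ∈ S^d×S^d : x = y}) = 0, let w ∈ ℝ^{d+1} with ‖w‖ < 1, let R be an orthogonal (d+1)×(d+1) matrix, and let M : S^d → S^d be given by M(x) = w + (Rx + w)(1 − ‖w‖²)/‖Rx + w‖². Then for every p ∈ ℝ, ∫_{(S^d)^4} C(x1,x2,x3,x4)^p d((M#μ)⊗(M#μ)⊗(M#μ)⊗(M#μ)) = ∫_{(S^d)^4} C(x1,x2,x3,x4)^p d(μ⊗μ⊗μ⊗μ), where both sides are integrals of a nonnegative function with values in [0,∞] and M#μ denotes the pushforward of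 μ by M. -/
open MeasureTheory Metric Filter Matrix
open scoped RealInnerProductSpace ENNReal

noncomputable abbrev Sph (d : ℕ) : Type := Metric.sphere (0 : Euc d) 1

/-- The cross ratio of four points. -/
noncomputable def crossRatio {d : ℕ} (x1 x2 x3 x4 : Euc d) : ℝ :=
  (‖x1 - x2‖ ^ 2 * ‖x3 - x4‖ ^ 2) / (‖x2 - x3‖ ^ 2 * ‖x4 - x1‖ ^ 2)

noncomputable def WS (d : ℕ) (w : Euc d) (R : Matrix (Fin (d+1)) (Fin (d+1)) ℝ)
    (x : Euc d) : Euc d :=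
  w + ((1 - ‖w‖ ^ 2) / ‖Matrix.toEuclideanLin R x + w‖ ^ 2) • (Matrix.toEuclideanLin R x + w)

lemma aux_inner (n : ℕ) (R : Matrix (Fin n) (Fin n) ℝ) (hR : R * Rᵀ = 1)
    (u v : EuclideanSpace ℝ (Fin n)) :
    ⟪Matrix.toEuclideanLin R u, Matrix.toEuclideanLin R v⟫ = ⟪u, v⟫ := by
  have hR' : Rᵀ * R = 1 := mul_eq_one_comm.mp hR
  simp only [toEuclideanLin_apply, PiLp.inner_apply, RCLike.inner_apply, conj_trivial]
  have key : ∀ a b : Fin n → ℝ, (R *ᵥ a) ⬝ᵥ (R *ᵥ b) = a ⬝ᵥ b := by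
    intro a b
    rw [Matrix.dotProduct_mulVec, Matrix.vecMul_mulVec, hR', Matrix.vecMul_one]
  have := key ((WithLp.equiv 2 (Fin n → ℝ)) u) ((WithLp.equiv 2 (Fin n → ℝ)) v)
  simpa [dotProduct, mul_comm] using this

lemma aux_norm (n : ℕ) (R : Matrix (Fin n) (Fin n) ℝ) (hR : R * Rᵀ = 1)
    (v : EuclideanSpace ℝ (Fin n)) : ‖Matrix.toEuclideanLin R v‖ = ‖v‖ := by
  have := aux_inner n R hR v v
  rw [real_inner_self_eq_norm_sq, real_inner_self_eq_norm_sq] at this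
  nlinarith [norm_nonneg (Matrix.toEuclideanLin R v), norm_nonneg v]

lemma aux_inv {E : Type*} [NormedAddCommGroup E] [InnerProductSpace ℝ E]
    (a b : E) (ha : a ≠ 0) (hb : b ≠ 0) :
    ‖(‖a‖^2)⁻¹ • a - (‖b‖^2)⁻¹ • b‖^2 = ‖a - b‖^2 / (‖a‖^2 * ‖b‖^2) := by
  have ha' : ‖a‖ ≠ 0 := norm_ne_zero_iff.mpr ha
  have hb' : ‖b‖ ≠ 0 := norm_ne_zero_iff.mpr hb
  rw [norm_sub_sq_real, norm_sub_sq_real, norm_smul, norm_smul,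
    real_inner_smul_left, real_inner_smul_right, mul_pow, mul_pow,
    Real.norm_eq_abs, Real.norm_eq_abs, abs_inv, abs_pow, abs_norm,
    abs_inv, abs_pow, abs_norm]
  field_simp
  ring

lemma aux_pos (d : ℕ) (w : Euc d) (hw : ‖w‖ < 1) (R : Matrix (Fin (d+1)) (Fin (d+1)) ℝ)
    (hR : R * Rᵀ = 1) (x : Euc d) (hx : ‖x‖ = 1) :
    0 < ‖Matrix.toEuclideanLin R x + w‖ := by
  have h1 : ‖Matrix.toEuclideanLin R x‖ = 1 := by rw [aux_norm _ R hR, hx]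
  have h2 := norm_sub_norm_le (Matrix.toEuclideanLin R x) (-w)
  rw [sub_neg_eq_add, norm_neg, h1] at h2
  linarith

set_option maxHeartbeats 1000000 in
lemma aux_dist (d : ℕ) (w : Euc d) (hw : ‖w‖ < 1) (R : Matrix (Fin (d+1)) (Fin (d+1)) ℝ)
    (hR : R * Rᵀ = 1) (x y : Euc d) (hx : ‖x‖ = 1) (hy : ‖y‖ = 1) :
    ‖WS d w R x - WS d w R y‖ ^ 2 =
      (1 - ‖w‖ ^ 2) ^ 2 / (‖Matrix.toEuclideanLin R x + w‖ ^ 2 * ‖Matrix.toEuclideanLin R y + w‖ ^ 2)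
        * ‖x - y‖ ^ 2 := by
  set a : Euc d := Matrix.toEuclideanLin R x + w with ha
  set b : Euc d := Matrix.toEuclideanLin R y + w with hb
  have hap : 0 < ‖a‖ := aux_pos d w hw R hR x hx
  have hbp : 0 < ‖b‖ := aux_pos d w hw R hR y hy
  have ha0 : a ≠ 0 := norm_pos_iff.mp hap
  have hb0 : b ≠ 0 := norm_pos_iff.mp hbp
  have hab : ‖a - b‖ = ‖x - y‖ := by
    rw [ha, hb, show Matrix.toEuclideanLin R x + w - (Matrix.toEuclideanLin R y + w)
        = Matrix.toEuclideanLin R (x - y) by rw [map_sub]; abel]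
    exact aux_norm _ R hR _
  have hdiff : WS d w R x - WS d w R y
      = (1 - ‖w‖ ^ 2) • ((‖a‖^2)⁻¹ • a - (‖b‖^2)⁻¹ • b) := by
    rw [WS, WS, ← ha, ← hb, add_sub_add_left_eq_sub, smul_sub, smul_smul, smul_smul,
      div_eq_mul_inv, div_eq_mul_inv]
  rw [hdiff, norm_smul, mul_pow, aux_inv a b ha0 hb0, hab,
    Real.norm_eq_abs, sq_abs]
  ring

set_option maxHeartbeats 1000000 in
lemma aux_cr (d : ℕ) (w : Euc d) (hw : ‖w‖ < 1) (R : Matrix (Fin (d+1)) (Fin (d+1)) ℝ)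
    (hR : R * Rᵀ = 1) (x1 x2 x3 x4 : Euc d)
    (h1 : ‖x1‖ = 1) (h2 : ‖x2‖ = 1) (h3 : ‖x3‖ = 1) (h4 : ‖x4‖ = 1) :
    crossRatio (WS d w R x1) (WS d w R x2) (WS d w R x3) (WS d w R x4)
      = crossRatio x1 x2 x3 x4 := by
  set f1 := ‖Matrix.toEuclideanLin R x1 + w‖ ^ 2 with hf1
  set f2 := ‖Matrix.toEuclideanLin R x2 + w‖ ^ 2 with hf2
  set f3 := ‖Matrix.toEuclideanLin R x3 + w‖ ^ 2 with hf3
  set f4 := ‖Matrix.toEuclideanLin R x4 + w‖ ^ 2 with hf4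
  have hp1 : 0 < f1 := pow_pos (aux_pos d w hw R hR x1 h1) 2
  have hp2 : 0 < f2 := pow_pos (aux_pos d w hw R hR x2 h2) 2
  have hp3 : 0 < f3 := pow_pos (aux_pos d w hw R hR x3 h3) 2
  have hp4 : 0 < f4 := pow_pos (aux_pos d w hw R hR x4 h4) 2
  have hcpos : (0:ℝ) < (1 - ‖w‖ ^ 2) := by nlinarith [norm_nonneg w]
  set K : ℝ := (1 - ‖w‖ ^ 2) ^ 2 * (1 - ‖w‖ ^ 2) ^ 2 / (f1 * f2 * (f3 * f4)) with hK
  have hK0 : K ≠ 0 := by positivity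
  rw [crossRatio, crossRatio,
    aux_dist d w hw R hR x1 x2 h1 h2, aux_dist d w hw R hR x3 x4 h3 h4,
    aux_dist d w hw R hR x2 x3 h2 h3, aux_dist d w hw R hR x4 x1 h4 h1,
    ← hf1, ← hf2, ← hf3, ← hf4]
  have hnum : (1 - ‖w‖ ^ 2) ^ 2 / (f1 * f2) * ‖x1 - x2‖ ^ 2
        * ((1 - ‖w‖ ^ 2) ^ 2 / (f3 * f4) * ‖x3 - x4‖ ^ 2)
      = K * (‖x1 - x2‖ ^ 2 * ‖x3 - x4‖ ^ 2) := by
    rw [hK]; field_simp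
  have hden : (1 - ‖w‖ ^ 2) ^ 2 / (f2 * f3) * ‖x2 - x3‖ ^ 2
        * ((1 - ‖w‖ ^ 2) ^ 2 / (f4 * f1) * ‖x4 - x1‖ ^ 2)
      = K * (‖x2 - x3‖ ^ 2 * ‖x4 - x1‖ ^ 2) := by
    rw [hK]; field_simp
  rw [hnum, hden, mul_div_mul_left _ _ hK0]


/-- the pushforward of a diagonal-free Borel probability measure on the sphere
by a Watanabe–Strogatz map leaves the cross-ratio integrals invariant. -/
theorem pushforward_crossRatio_integral_invariant
    (d : ℕ) (hd : 1 ≤ d)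
    (μ : Measure (Sph d)) [IsProbabilityMeasure μ]
    (hdiag : (μ.prod μ) {z : Sph d × Sph d | z.1 = z.2} = 0)
    (w : Euc d) (hw : ‖w‖ < 1)
    (R : Matrix (Fin (d+1)) (Fin (d+1)) ℝ) (hR : R * Rᵀ = 1)
    (M : Sph d → Sph d)
    (hM : ∀ x : Sph d, (M x : Euc d) = w +
      ((1 - ‖w‖ ^ 2) / ‖Matrix.toEuclideanLin R (x : Euc d) + w‖ ^ 2) •
        (Matrix.toEuclideanLin R (x : Euc d) + w))
    (p : ℝ) :
    ∫⁻ z : Fin 4 → Sph d,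
        ENNReal.ofReal (crossRatio (z 0 : Euc d) (z 1 : Euc d) (z 2 : Euc d) (z 3 : Euc d) ^ p)
        ∂Measure.pi (fun _ => μ.map M)
      = ∫⁻ z : Fin 4 → Sph d,
        ENNReal.ofReal (crossRatio (z 0 : Euc d) (z 1 : Euc d) (z 2 : Euc d) (z 3 : Euc d) ^ p)
        ∂Measure.pi (fun _ => μ) := by
  have hsph : ∀ x : Sph d, ‖(x : Euc d)‖ = 1 := fun x => by
    simpa using mem_sphere_zero_iff_norm.mp x.2
  have hMW : ∀ x : Sph d, (M x : Euc d) = WS d w R (x : Euc d) := fun x => (hM x).trans rfl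
  -- continuity / measurability of M
  have hLcont : Continuous (fun v : Euc d => Matrix.toEuclideanLin R v) :=
    (Matrix.toEuclideanLin R).continuous_of_finiteDimensional
  have hacont : Continuous (fun x : Sph d => Matrix.toEuclideanLin R (x : Euc d) + w) :=
    ((hLcont.comp continuous_subtype_val).add continuous_const)
  have hWScont : Continuous (fun x : Sph d => WS d w R (x : Euc d)) := by
    unfold WS
    refine continuous_const.add (Continuous.smul (f := fun x : Sph d => (1 - ‖w‖ ^ 2) / ‖Matrix.toEuclideanLin R (x : Euc d) + w‖ ^ 2) ?_ hacont)
    refine Continuous.div continuous_const ((hacont.norm).pow 2) fun x => ?_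
    exact ne_of_gt (pow_pos (aux_pos d w hw R hR _ (hsph x)) 2)
  have hMcont : Continuous M := by
    refine continuous_induced_rng.mpr ?_
    exact hWScont.congr fun x => (hMW x).symm
  have hMmeas : Measurable M := hMcont.measurable
  haveI : IsProbabilityMeasure (μ.map M) := Measure.isProbabilityMeasure_map hMmeas.aemeasurable
  have hmp : MeasurePreserving (fun (z : Fin 4 → Sph d) i => M (z i))
      (Measure.pi fun _ => μ) (Measure.pi fun _ => μ.map M) :=
    measurePreserving_pi (fun _ => μ) (fun _ => μ.map M) (fun _ => ⟨hMmeas, rfl⟩)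
  have hm : ∀ i j : Fin 4, Measurable fun z : Fin 4 → Sph d =>
      ‖(z i : Euc d) - (z j : Euc d)‖ ^ 2 := fun i j =>
    ((((continuous_subtype_val.comp (continuous_apply i)).sub
      (continuous_subtype_val.comp (continuous_apply j))).norm.pow 2)).measurable
  have hfm : Measurable fun z : Fin 4 → Sph d =>
      ENNReal.ofReal (crossRatio (z 0 : Euc d) (z 1 : Euc d) (z 2 : Euc d) (z 3 : Euc d) ^ p) := by
    simp only [crossRatio]
    exact (((((hm 0 1).mul (hm 2 3)).div ((hm 1 2).mul (hm 3 0))).pow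
      measurable_const)).ennreal_ofReal
  rw [← hmp.lintegral_comp hfm]
  refine lintegral_congr fun z => ?_
  have := aux_cr d w hw R hR (z 0 : Euc d) (z 1 : Euc d) (z 2 : Euc d) (z 3 : Euc d)
    (hsph _) (hsph _) (hsph _) (hsph _)
  simp only [hMW]
  rw [this]
end

section
/- Let d ≥ 1 and let p ∈ ℝ satisfy −d/2 < p < d/2. Then H_p[ρ_uni] < ∞, i.e. the integral ∫_{(S^d)^4} C(x1,x2,x3,x4)^p dσ(x1)dσ(x2)dσ(x3)dσ(x4) is finite. -/
open MeasureTheory Metric Filter Matrix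
open scoped RealInnerProductSpace ENNReal

/-- The `d`-dimensional surface (Hausdorff) measure on the sphere `S^d`. -/
noncomputable def sphereMeasure (d : ℕ) : Measure (Sph d) := μH[(d : ℝ)]

/-- `ρ` is a probability density on the sphere: nonnegative, continuous, total mass one. -/
def IsProbDensity (d : ℕ) (ρ : Sph d → ℝ) : Prop :=
  Continuous ρ ∧ (∀ x, 0 ≤ ρ x) ∧ ∫ x, ρ x ∂sphereMeasure d = 1

/-- The functional `H_p[ρ] = ∫ C(x₁,x₂,x₃,x₄)^p ρ(x₁)ρ(x₂)ρ(x₃)ρ(x₄) dσ⁴ ∈ [0,∞]`. -/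
noncomputable def Hp (d : ℕ) (p : ℝ) (ρ : Sph d → ℝ) : ℝ≥0∞ :=
  ∫⁻ x : Fin 4 → Sph d,
    ENNReal.ofReal (crossRatio (x 0 : Euc d) (x 1 : Euc d) (x 2 : Euc d) (x 3 : Euc d) ^ p)
      * ∏ i, ENNReal.ofReal (ρ (x i))
    ∂Measure.pi (fun _ => sphereMeasure d)

/-- The uniform probability density `ρ_uni ≡ 1/σ(S^d)` on the sphere. -/
noncomputable def uniDensity (d : ℕ) : Sph d → ℝ :=
  fun _ => ((sphereMeasure d) Set.univ).toReal⁻¹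

namespace HpAux

variable {d : ℕ}

/-- north pole -/
noncomputable def np (d : ℕ) : Euc d := EuclideanSpace.single (Fin.last d) 1

lemma norm_np : ‖np d‖ = 1 := by simp [np, EuclideanSpace.norm_single]

lemma np_ne_zero : np d ≠ 0 := by
  intro h; have : ‖np d‖ = 1 := norm_np; rw [h] at this; simp at this

lemma sph_meas_eq (A : Set (Sph d)) :
    sphereMeasure d A = μH[(d : ℝ)] ((Subtype.val '' A : Set (Euc d))) :=
  (isometry_subtype_coe.hausdorffMeasure_image (Or.inl (by positivity)) A).symm

/-- finiteness & scaling for balls in the tangent hyperplane -/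
lemma hyp_ball (hd : 1 ≤ d) : ∃ m : ℝ≥0∞, m ≠ ⊤ ∧ ∀ r : ℝ, 0 ≤ r →
    μH[(d:ℝ)] ({z : Euc d | ⟪np d, z⟫ = 0} ∩ Metric.closedBall 0 r)
      ≤ ENNReal.ofReal (r ^ d) * m := by
  classical
  set K : Submodule ℝ (Euc d) := (ℝ ∙ (np d))ᗮ with hKdef
  haveI : Fact (Module.finrank ℝ (Euc d) = d + 1) :=
    ⟨by simpa using finrank_euclideanSpace_fin (𝕜 := ℝ) (n := d + 1)⟩
  have hK : Module.finrank ℝ K = d := Submodule.finrank_orthogonal_span_singleton np_ne_zero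
  borelize ↥K
  haveI : (μH[(d:ℝ)] : Measure K).IsAddHaarMeasure := by
    have h := MeasureTheory.isAddHaarMeasure_hausdorffMeasure (E := K)
    rwa [hK] at h
  refine ⟨μH[(d:ℝ)] (Metric.closedBall (0 : K) 1), ?_, ?_⟩
  · exact (IsCompact.measure_lt_top (isCompact_closedBall _ _)).ne
  · intro r hr
    have himg : {z : Euc d | ⟪np d, z⟫ = 0} ∩ Metric.closedBall 0 r
        = (Subtype.val) '' (Metric.closedBall (0 : K) r) := by
      ext z
      simp only [Set.mem_inter_iff, Set.mem_setOf_eq, Metric.mem_closedBall,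
        Set.mem_image, dist_zero_right]
      constructor
      · rintro ⟨hz, hznorm⟩
        refine ⟨⟨z, ?_⟩, by simpa [dist_eq_norm], rfl⟩
        exact Submodule.mem_orthogonal_singleton_iff_inner_right.mpr hz
      · rintro ⟨w, hw, rfl⟩
        refine ⟨Submodule.mem_orthogonal_singleton_iff_inner_right.mp w.2, ?_⟩
        simpa [dist_eq_norm] using hw
    rw [himg, isometry_subtype_coe.hausdorffMeasure_image (Or.inl (by positivity))]
    rw [MeasureTheory.Measure.addHaar_closedBall' _ _ hr, hK]

/-- sqrt difference estimate -/
lemma sqrt_diff {u v : ℝ} (hu : (1:ℝ)/4 ≤ u) (hv : (1:ℝ)/4 ≤ v) :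
    |Real.sqrt u - Real.sqrt v| ≤ |u - v| := by
  have hu0 : (0:ℝ) ≤ u := by linarith
  have hv0 : (0:ℝ) ≤ v := by linarith
  have h1 : (1:ℝ)/2 ≤ Real.sqrt u := by
    rw [show (1:ℝ)/2 = Real.sqrt (1/4) by
      rw [show (1:ℝ)/4 = (1/2)^2 by norm_num, Real.sqrt_sq (by norm_num)]]
    exact Real.sqrt_le_sqrt hu
  have h2 : (1:ℝ)/2 ≤ Real.sqrt v := by
    rw [show (1:ℝ)/2 = Real.sqrt (1/4) by
      rw [show (1:ℝ)/4 = (1/2)^2 by norm_num, Real.sqrt_sq (by norm_num)]]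
    exact Real.sqrt_le_sqrt hv
  have hsum : 1 ≤ Real.sqrt u + Real.sqrt v := by linarith
  have key : (Real.sqrt u - Real.sqrt v) * (Real.sqrt u + Real.sqrt v) = u - v := by
    nlinarith [Real.sq_sqrt hu0, Real.sq_sqrt hv0]
  calc |Real.sqrt u - Real.sqrt v| = |Real.sqrt u - Real.sqrt v| * 1 := (mul_one _).symm
    _ ≤ |Real.sqrt u - Real.sqrt v| * (Real.sqrt u + Real.sqrt v) := by
        apply mul_le_mul_of_nonneg_left hsum (abs_nonneg _)
    _ = |(Real.sqrt u - Real.sqrt v) * (Real.sqrt u + Real.sqrt v)| := by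
        rw [abs_mul, abs_of_nonneg (by linarith : (0:ℝ) ≤ Real.sqrt u + Real.sqrt v)]
    _ = |u - v| := by rw [key]

/-- the graph map -/
noncomputable def gmap (d : ℕ) : Euc d → Euc d :=
  fun z => z + Real.sqrt (1 - ‖z‖^2) • np d

lemma gmap_lip : LipschitzOnWith 3 (gmap d)
    {z : Euc d | ⟪np d, z⟫ = 0 ∧ ‖z‖^2 ≤ 3/4} := by
  rw [lipschitzOnWith_iff_dist_le_mul]
  rintro z ⟨hz1, hz2⟩ w ⟨hw1, hw2⟩
  rw [dist_eq_norm, dist_eq_norm]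
  set t : ℝ := Real.sqrt (1 - ‖z‖^2) - Real.sqrt (1 - ‖w‖^2) with ht
  have hdiff : gmap d z - gmap d w = (z - w) + t • np d := by
    simp only [gmap, ht, sub_smul]; abel
  have horth : ⟪z - w, t • np d⟫ = 0 := by
    rw [inner_smul_right, ← real_inner_comm, inner_sub_right, hz1, hw1]
    ring
  have hns : ‖gmap d z - gmap d w‖^2 = ‖z - w‖^2 + t^2 := by
    rw [hdiff, norm_add_sq_real, horth]
    rw [norm_smul, Real.norm_eq_abs, norm_np, mul_one, sq_abs]
    ring
  have hzn : ‖z‖ ≤ 1 := by nlinarith [norm_nonneg z]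
  have hwn : ‖w‖ ≤ 1 := by nlinarith [norm_nonneg w]
  have htb : |t| ≤ 2 * ‖z - w‖ := by
    have h1 : |t| ≤ |(1 - ‖z‖^2) - (1 - ‖w‖^2)| := by
      apply sqrt_diff <;> linarith
    have h2 : |(1 - ‖z‖^2) - (1 - ‖w‖^2)| = |‖w‖ - ‖z‖| * (‖w‖ + ‖z‖) := by
      rw [show (1 - ‖z‖^2) - (1 - ‖w‖^2) = (‖w‖ - ‖z‖) * (‖w‖ + ‖z‖) by ring, abs_mul,
        abs_of_nonneg (add_nonneg (norm_nonneg w) (norm_nonneg z))]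
    have h3 : |‖w‖ - ‖z‖| ≤ ‖z - w‖ := by
      rw [abs_sub_comm]; exact abs_norm_sub_norm_le z w
    have h4 : ‖w‖ + ‖z‖ ≤ 2 := by linarith
    calc |t| ≤ |‖w‖ - ‖z‖| * (‖w‖ + ‖z‖) := by rw [← h2]; exact h1
      _ ≤ ‖z - w‖ * 2 := by
          apply mul_le_mul h3 h4 (add_nonneg (norm_nonneg w) (norm_nonneg z)) (norm_nonneg _)
      _ = 2 * ‖z - w‖ := by ring
  have hsq : ‖gmap d z - gmap d w‖^2 ≤ (3 * ‖z - w‖)^2 := by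
    rw [hns]
    nlinarith [sq_abs t, abs_nonneg t, norm_nonneg (z - w), sq_nonneg t]
  have h9 : (0:ℝ) ≤ 3 * ‖z - w‖ := by positivity
  have hfinal : ‖gmap d z - gmap d w‖ ≤ 3 * ‖z - w‖ := by
    nlinarith [norm_nonneg (gmap d z - gmap d w)]
  simpa using hfinal

/-- the north cap bound -/
lemma cap_np (hd : 1 ≤ d) : ∃ C : ℝ≥0∞, C ≠ ⊤ ∧ ∀ r : ℝ, 0 < r → r ≤ 1 →
    μH[(d:ℝ)] ({y : Euc d | ‖y‖ = 1} ∩ Metric.closedBall (np d) r)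
      ≤ C * ENNReal.ofReal (r ^ d) := by
  obtain ⟨m, hm, hball⟩ := hyp_ball hd
  refine ⟨(3:ℝ≥0∞)^(d:ℝ) * m,
    ENNReal.mul_ne_top (ENNReal.rpow_ne_top_of_nonneg (by positivity) (by norm_num)) hm, ?_⟩
  intro r hr0 hr1
  set D : Set (Euc d) := {z : Euc d | ⟪np d, z⟫ = 0 ∧ ‖z‖^2 ≤ 3/4} with hD
  have hsub : {y : Euc d | ‖y‖ = 1} ∩ Metric.closedBall (np d) r
      ⊆ gmap d '' (D ∩ Metric.closedBall 0 r) := by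
    rintro y ⟨hy, hyr⟩
    simp only [Set.mem_setOf_eq] at hy
    rw [Metric.mem_closedBall, dist_eq_norm] at hyr
    set t : ℝ := ⟪np d, y⟫ with htdef
    have hyn : ‖y - np d‖^2 = 2 - 2*t := by
      rw [norm_sub_sq_real, hy, norm_np, real_inner_comm]
      ring
    have ht2 : 2 - 2*t ≤ r^2 := by
      rw [← hyn]; exact pow_le_pow_left₀ (norm_nonneg _) hyr 2
    have htge : 1/2 ≤ t := by nlinarith
    have htle : t ≤ 1 := by
      have := abs_real_inner_le_norm (np d) y
      rw [norm_np, hy] at this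
      calc t ≤ |t| := le_abs_self t
        _ ≤ 1 := by simpa using this
    set z : Euc d := y - t • np d with hz
    have hz1 : ⟪np d, z⟫ = 0 := by
      rw [hz, inner_sub_right, inner_smul_right, real_inner_self_eq_norm_sq, norm_np]
      ring
    have hzn : ‖z‖^2 = 1 - t^2 := by
      have hyt : ⟪y, np d⟫ = t := by rw [real_inner_comm]
      rw [hz, norm_sub_sq_real, inner_smul_right, norm_smul, Real.norm_eq_abs, norm_np,
        mul_one, sq_abs, hy, hyt]
      ring
    have hz2 : ‖z‖^2 ≤ 3/4 := by nlinarith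
    have hzr : ‖z‖ ≤ r := by
      have h5 : ‖z‖^2 ≤ r^2 := by nlinarith
      nlinarith [norm_nonneg z]
    refine ⟨z, ⟨⟨hz1, hz2⟩, by simpa [dist_eq_norm] using hzr⟩, ?_⟩
    rw [gmap, hzn]
    rw [show (1 : ℝ) - (1 - t^2) = t^2 by ring, Real.sqrt_sq (by linarith)]
    rw [hz]; abel
  calc μH[(d:ℝ)] ({y : Euc d | ‖y‖ = 1} ∩ Metric.closedBall (np d) r)
      ≤ μH[(d:ℝ)] (gmap d '' (D ∩ Metric.closedBall 0 r)) := measure_mono hsub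
    _ ≤ (3:ℝ≥0∞)^(d:ℝ) * μH[(d:ℝ)] (D ∩ Metric.closedBall 0 r) := by
        have hlip := (gmap_lip (d := d)).mono
          (Set.inter_subset_left : D ∩ Metric.closedBall 0 r ⊆ D)
        simpa using hlip.hausdorffMeasure_image_le (by positivity : (0:ℝ) ≤ (d:ℝ))
    _ ≤ (3:ℝ≥0∞)^(d:ℝ) * (ENNReal.ofReal (r ^ d) * m) := by
        apply mul_le_mul_right ?_ _
        refine le_trans (measure_mono ?_) (hball r hr0.le)
        exact Set.inter_subset_inter_left _ (fun z hz => hz.1)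
    _ = (3:ℝ≥0∞)^(d:ℝ) * m * ENNReal.ofReal (r ^ d) := by ring

/-- general cap bound -/
lemma cap_any (hd : 1 ≤ d) : ∃ C : ℝ≥0∞, C ≠ ⊤ ∧ ∀ x : Euc d, ‖x‖ = 1 → ∀ r : ℝ, 0 < r → r ≤ 1 →
    μH[(d:ℝ)] ({y : Euc d | ‖y‖ = 1} ∩ Metric.closedBall x r)
      ≤ C * ENNReal.ofReal (r ^ d) := by
  obtain ⟨C, hC, hcap⟩ := cap_np hd
  refine ⟨C, hC, ?_⟩
  intro x hx r hr0 hr1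
  set R := Submodule.reflection (ℝ ∙ (x - np d))ᗮ with hR
  have hRx : R x = np d := Submodule.reflection_sub (by rw [hx, norm_np])
  have hsub : R '' ({y : Euc d | ‖y‖ = 1} ∩ Metric.closedBall x r)
      ⊆ {y : Euc d | ‖y‖ = 1} ∩ Metric.closedBall (np d) r := by
    rintro _ ⟨y, ⟨hy1, hy2⟩, rfl⟩
    refine ⟨by simp only [Set.mem_setOf_eq] at hy1 ⊢; rw [R.norm_map]; exact hy1, ?_⟩
    rw [Metric.mem_closedBall, ← hRx, dist_eq_norm, ← map_sub, R.norm_map, ← dist_eq_norm]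
    exact hy2
  have himg : μH[(d:ℝ)] ({y : Euc d | ‖y‖ = 1} ∩ Metric.closedBall x r)
      = μH[(d:ℝ)] (R '' ({y : Euc d | ‖y‖ = 1} ∩ Metric.closedBall x r)) := by
    rw [R.isometry.hausdorffMeasure_image (Or.inl (by positivity))]
  rw [himg]
  exact le_trans (measure_mono hsub) (hcap r hr0 hr1)

/-- total measure of the sphere is finite -/
lemma S_finite (hd : 1 ≤ d) : μH[(d:ℝ)] {y : Euc d | ‖y‖ = 1} < ⊤ := by
  obtain ⟨C, hC, hcap⟩ := cap_any hd
  have hSeq : {y : Euc d | ‖y‖ = 1} = Metric.sphere (0 : Euc d) 1 := by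
    ext y; simp [Metric.mem_sphere, dist_eq_norm]
  have hcomp : IsCompact {y : Euc d | ‖y‖ = 1} := by
    rw [hSeq]; exact isCompact_sphere 0 1
  obtain ⟨b, hbsub, hbfin, hcov⟩ := hcomp.elim_finite_subcover_image
    (b := {y : Euc d | ‖y‖ = 1}) (c := fun x => Metric.ball x 1)
    (fun x _ => isOpen_ball)
    (fun y hy => Set.mem_biUnion hy (Metric.mem_ball_self one_pos))
  have hle : μH[(d:ℝ)] {y : Euc d | ‖y‖ = 1}
      ≤ μH[(d:ℝ)] (⋃ x ∈ b, ({y : Euc d | ‖y‖ = 1} ∩ Metric.closedBall x 1)) := by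
    apply measure_mono
    intro y hy
    obtain ⟨x, hxb, hyx⟩ := Set.mem_iUnion₂.mp (hcov hy)
    exact Set.mem_biUnion hxb ⟨hy, Metric.ball_subset_closedBall hyx⟩
  refine lt_of_le_of_lt hle (measure_biUnion_lt_top hbfin fun x hxb => ?_)
  refine lt_of_le_of_lt (hcap x (hbsub hxb) 1 one_pos le_rfl) ?_
  simpa using hC.lt_top

lemma sph_univ_lt_top (hd : 1 ≤ d) : sphereMeasure d Set.univ < ⊤ := by
  rw [sph_meas_eq, Set.image_univ, Subtype.range_coe]
  have : (Metric.sphere (0 : Euc d) 1 : Set (Euc d)) = {y : Euc d | ‖y‖ = 1} := by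
    ext y; simp [dist_eq_norm]
  rw [this]; exact S_finite hd

/-- helper: `((2⁻¹)^k)^(-s) = 2^(s*k)` -/
lemma c_pow_neg_rpow (k : ℕ) (s : ℝ) : (((2:ℝ)⁻¹ ^ k) : ℝ) ^ (-s) = (2:ℝ) ^ (s * (k:ℝ)) := by
  rw [inv_pow, Real.inv_rpow (by positivity), Real.rpow_neg (by positivity), inv_inv,
    ← Real.rpow_natCast (2:ℝ) k, ← Real.rpow_mul (by norm_num), mul_comm]

/-- uniform bound for the singular integral -/
lemma si (hd : 1 ≤ d) {s : ℝ} (hs0 : 0 ≤ s) (hsd : s < d) :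
    ∃ B : ℝ≥0∞, B ≠ ⊤ ∧ ∀ x : Sph d,
      ∫⁻ y, ENNReal.ofReal (‖(x:Euc d) - (y:Euc d)‖ ^ (-s)) ∂(sphereMeasure d) ≤ B := by
  obtain ⟨C, hC, hcap⟩ := cap_any hd
  set c : ℝ := 2⁻¹ with hcdef
  have hc0 : (0:ℝ) < c := by norm_num
  have hc1 : c < 1 := by norm_num
  set qr : ℝ := 2^s * c^d with hqrdef
  have hqr0 : 0 ≤ qr := by positivity
  have hqr1 : qr < 1 := by
    have h2d : (0:ℝ) < 2^d := by positivity
    have hlt : (2:ℝ)^s < 2^d := by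
      have := Real.rpow_lt_rpow_of_exponent_lt (x := 2) (by norm_num) hsd
      rwa [Real.rpow_natCast] at this
    have hcd : c^d = ((2:ℝ)^d)⁻¹ := by rw [hcdef, inv_pow]
    rw [hqrdef, hcd, ← div_eq_mul_inv, div_lt_one h2d]
    exact hlt
  set aa : ℝ := 2^(s*2) * c^d with haadef
  have haa0 : 0 ≤ aa := by positivity
  set B : ℝ≥0∞ := ENNReal.ofReal (2^s) * sphereMeasure d Set.univ
      + C * ENNReal.ofReal aa * (1 - ENNReal.ofReal qr)⁻¹ with hBdef
  have hBtop : B ≠ ⊤ := by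
    apply ENNReal.add_ne_top.mpr
    constructor
    · exact ENNReal.mul_ne_top ENNReal.ofReal_ne_top (sph_univ_lt_top hd).ne
    · refine ENNReal.mul_ne_top (ENNReal.mul_ne_top hC ENNReal.ofReal_ne_top) ?_
      rw [ENNReal.inv_ne_top]
      intro h0
      have := tsub_eq_zero_iff_le.mp h0
      exact absurd this (by simpa using (ENNReal.ofReal_lt_one.mpr hqr1).not_ge)
  refine ⟨B, hBtop, ?_⟩
  intro x
  set N : Sph d → ℝ := fun y => ‖(x:Euc d) - (y:Euc d)‖ with hN
  have hNcont : Continuous N := (continuous_const.sub continuous_subtype_val).norm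
  set A : ℕ → Set (Sph d) := fun k => N ⁻¹' (Set.Ioc (c^(k+2)) (c^(k+1))) with hA
  have hmeasA : ∀ k, MeasurableSet (A k) := fun k =>
    (hNcont.measurable) measurableSet_Ioc
  -- pointwise bound
  have hpt : ∀ y, ENNReal.ofReal ((N y) ^ (-s)) ≤
      ENNReal.ofReal (2^s)
        + ∑' (k : ℕ), (A k).indicator (fun _ => ENNReal.ofReal ((2:ℝ)^(s*((k:ℝ)+2)))) y := by
    intro y
    have hN0 : 0 ≤ N y := norm_nonneg _
    by_cases h1 : N y ≤ c
    · rcases eq_or_lt_of_le hN0 with h2 | h2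
      · -- N y = 0
        refine le_trans ?_ le_self_add
        apply ENNReal.ofReal_le_ofReal
        rw [← h2]
        refine le_trans (Real.zero_rpow_le_one _) ?_
        have := Real.rpow_le_rpow_of_exponent_le (x := 2) (by norm_num) hs0
        simpa using this
      · -- 0 < N y ≤ c : find dyadic shell
        have hex : ∃ n, c^n < N y := exists_pow_lt_of_lt_one h2 hc1
        set n₀ := Nat.find hex with hn₀def
        have hspec : c^n₀ < N y := Nat.find_spec hex
        have hmin : ∀ m, m < n₀ → ¬ (c^m < N y) := fun m hm => Nat.find_min hex hm
        have hn2 : 2 ≤ n₀ := by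
          by_contra hlt
          push_neg at hlt
          interval_cases n₀
          · simp only [pow_zero] at hspec; linarith
          · simp only [pow_one] at hspec; linarith
        set k := n₀ - 2 with hkdef
        have hk2 : k + 2 = n₀ := by omega
        have hmem : y ∈ A k := by
          constructor
          · rw [hk2]; exact hspec
          · exact le_of_not_gt (hmin (k+1) (by omega))
        refine le_trans ?_ (le_trans (ENNReal.le_tsum k) le_add_self)
        rw [Set.indicator_of_mem hmem]
        apply ENNReal.ofReal_le_ofReal
        have hxy : c^(k+2) ≤ N y := by rw [hk2]; exact hspec.le
        have hle : (N y) ^ (-s) ≤ (c^(k+2):ℝ) ^ (-s) :=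
          Real.rpow_le_rpow_of_nonpos (by positivity) hxy (by linarith : -s ≤ 0)
        refine hle.trans_eq ?_
        rw [hcdef, c_pow_neg_rpow (k+2) s]
        congr 1
        push_cast
        ring
    · -- N y > c
      push_neg at h1
      refine le_trans ?_ le_self_add
      apply ENNReal.ofReal_le_ofReal
      have hmon := Real.rpow_le_rpow_of_nonpos hc0 h1.le (by linarith : -s ≤ 0)
      refine le_trans hmon ?_
      have hcs : (c:ℝ)^(-s) = 2^s := by
        calc (c:ℝ)^(-s) = ((2⁻¹:ℝ)^(1:ℕ))^(-s) := by rw [hcdef]; norm_num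
          _ = 2^(s*((1:ℕ):ℝ)) := c_pow_neg_rpow 1 s
          _ = 2^s := by norm_num
      exact hcs.le
  -- the norm-1 property of x
  have hx1 : ‖(x:Euc d)‖ = 1 := by
    have := x.2
    simpa [dist_eq_norm] using this
  -- per-shell measure bound
  have hshell : ∀ k : ℕ, sphereMeasure d (A k) ≤ C * ENNReal.ofReal ((c^(k+1))^d) := by
    intro k
    have hsub : Subtype.val '' (A k)
        ⊆ {z : Euc d | ‖z‖ = 1} ∩ Metric.closedBall (x:Euc d) (c^(k+1)) := by
      rintro _ ⟨y, hy, rfl⟩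
      refine ⟨?_, ?_⟩
      · have := y.2; simpa [dist_eq_norm] using this
      · rw [Metric.mem_closedBall, dist_eq_norm, norm_sub_rev]
        exact hy.2
    rw [sph_meas_eq]
    refine le_trans (measure_mono hsub) ?_
    have h1 : (0:ℝ) < c^(k+1) := by positivity
    have h2 : (c:ℝ)^(k+1) ≤ 1 := by
      apply pow_le_one₀ hc0.le hc1.le
    simpa using hcap (x:Euc d) hx1 (c^(k+1)) h1 h2
  -- real identity for the geometric series
  have RID : ∀ k : ℕ, (2:ℝ)^(s*((k:ℝ)+2)) * (c^(k+1))^d = aa * qr^k := by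
    intro k
    rw [haadef, hqrdef]
    rw [show s*((k:ℝ)+2) = s*(k:ℝ) + s*2 by ring, Real.rpow_add (by norm_num : (0:ℝ) < 2)]
    rw [Real.rpow_mul (by norm_num : (0:ℝ) ≤ 2) s (k:ℝ), Real.rpow_natCast]
    rw [← pow_mul, show (k+1)*d = d + d*k by ring, pow_add, pow_mul]
    rw [mul_pow]
    ring
  calc ∫⁻ y, ENNReal.ofReal (‖(x:Euc d) - (y:Euc d)‖ ^ (-s)) ∂(sphereMeasure d)
      ≤ ∫⁻ y, (ENNReal.ofReal (2^s)
        + ∑' (k : ℕ), (A k).indicator (fun _ => ENNReal.ofReal ((2:ℝ)^(s*((k:ℝ)+2)))) y)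
          ∂(sphereMeasure d) := lintegral_mono hpt
    _ = ENNReal.ofReal (2^s) * sphereMeasure d Set.univ
        + ∑' (k : ℕ), ENNReal.ofReal ((2:ℝ)^(s*((k:ℝ)+2))) * sphereMeasure d (A k) := by
        rw [lintegral_add_left measurable_const, lintegral_const]
        congr 1
        rw [lintegral_tsum (fun k => ((measurable_const).indicator (hmeasA k)).aemeasurable)]
        congr 1
        funext k
        rw [lintegral_indicator_const (hmeasA k)]
    _ ≤ ENNReal.ofReal (2^s) * sphereMeasure d Set.univ
        + ∑' (k : ℕ), C * ENNReal.ofReal (aa * qr^k) := by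
        apply add_le_add_right
        apply ENNReal.tsum_le_tsum
        intro k
        calc ENNReal.ofReal ((2:ℝ)^(s*((k:ℝ)+2))) * sphereMeasure d (A k)
            ≤ ENNReal.ofReal ((2:ℝ)^(s*((k:ℝ)+2))) * (C * ENNReal.ofReal ((c^(k+1))^d)) :=
              mul_le_mul_right (hshell k) _
          _ = C * ENNReal.ofReal ((2:ℝ)^(s*((k:ℝ)+2)) * (c^(k+1))^d) := by
              rw [ENNReal.ofReal_mul (by positivity)]
              ring
          _ = C * ENNReal.ofReal (aa * qr^k) := by rw [RID k]
    _ = ENNReal.ofReal (2^s) * sphereMeasure d Set.univ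
        + C * ENNReal.ofReal aa * (1 - ENNReal.ofReal qr)⁻¹ := by
        congr 1
        simp_rw [ENNReal.ofReal_mul haa0, ENNReal.ofReal_pow hqr0, ← mul_assoc]
        rw [ENNReal.tsum_mul_left, ENNReal.tsum_geometric]
    _ = B := hBdef.symm

lemma lmarginal_const'' {δ : Type*} {α : Type*} [DecidableEq δ] [MeasurableSpace α]
    (μ : Measure α) [SigmaFinite μ] (s : Finset δ) (c : ℝ≥0∞) (x : δ → α) :
    (∫⋯∫⁻_s, (fun _ => c) ∂(fun _ : δ => μ)) x = c * (μ Set.univ) ^ s.card := by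
  classical
  induction s using Finset.induction generalizing c with
  | empty => simp
  | @insert i s hi ih =>
      rw [lmarginal_insert' _ measurable_const hi]
      simp_rw [lintegral_const]
      rw [ih]
      rw [Finset.card_insert_of_notMem hi]
      ring

lemma four_bound [IsFiniteMeasure (sphereMeasure d)]
    (B : ℝ≥0∞) (hBtop : B ≠ ⊤)
    (F : Sph d → Sph d → ℝ≥0∞) (hF : Measurable (Function.uncurry F))
    (hB : ∀ a : Sph d, ∫⁻ b, F a b ∂(sphereMeasure d) ≤ B)
    (i j k l : Fin 4) (hij : i ≠ j) (hkj : k ≠ j) (hlj : l ≠ j)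
    (hkl : k ≠ l) :
    ∫⁻ x : Fin 4 → Sph d, F (x i) (x j) * F (x k) (x l)
      ∂Measure.pi (fun _ => sphereMeasure d) < ⊤ := by
  classical
  have hsph : Nonempty (Sph d) := by
    refine ⟨⟨EuclideanSpace.single (Fin.last d) 1, ?_⟩⟩
    simp [EuclideanSpace.norm_single]
  obtain ⟨pt⟩ := hsph
  set μ := sphereMeasure d
  set G : (Fin 4 → Sph d) → ℝ≥0∞ := fun x => F (x i) (x j) * F (x k) (x l) with hG
  have hFa : ∀ a : Sph d, Measurable (F a) := fun a =>
    hF.comp' (f := fun b => (a, b)) measurable_prodMk_left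
  have hmij : Measurable fun x : Fin 4 → Sph d => F (x i) (x j) :=
    hF.comp' (f := fun x : Fin 4 → Sph d => (x i, x j))
      ((measurable_pi_apply i).prodMk (measurable_pi_apply j))
  have hmkl : Measurable fun x : Fin 4 → Sph d => F (x k) (x l) :=
    hF.comp' (f := fun x : Fin 4 → Sph d => (x k, x l))
      ((measurable_pi_apply k).prodMk (measurable_pi_apply l))
  have hmG : Measurable G := hmij.mul hmkl
  have h1 : ∫⁻ x : Fin 4 → Sph d, G x ∂Measure.pi (fun _ => μ)
      = (∫⋯∫⁻_Finset.univ, G ∂(fun _ => μ)) (fun _ => pt) :=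
    lintegral_eq_lmarginal_univ _
  rw [h1]
  -- peel coordinate j
  have hjmem : j ∈ (Finset.univ : Finset (Fin 4)) := Finset.mem_univ j
  rw [lmarginal_erase' _ hmG hjmem]
  set s₁ : Finset (Fin 4) := Finset.univ.erase j with hs₁
  -- bound the inner integral over j
  have hstep1 : (fun x : Fin 4 → Sph d => ∫⁻ yj, G (Function.update x j yj) ∂μ)
      ≤ fun x => B * F (x k) (x l) := by
    intro x
    have heval : ∀ yj, G (Function.update x j yj) = F (x i) yj * F (x k) (x l) := by
      intro yj
      rw [hG]
      simp only [Function.update_of_ne hij, Function.update_of_ne hkj,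
        Function.update_of_ne hlj, Function.update_self]
    simp_rw [heval]
    rw [lintegral_mul_const _ (hFa (x i))]
    exact mul_le_mul_left (hB (x i)) _
  refine lt_of_le_of_lt (lmarginal_mono hstep1 _) ?_
  -- peel coordinate l
  have hlmem : l ∈ s₁ := Finset.mem_erase.mpr ⟨hlj, Finset.mem_univ l⟩
  have hm2 : Measurable fun x : Fin 4 → Sph d => B * F (x k) (x l) :=
    hmkl.const_mul B
  rw [lmarginal_erase' _ hm2 hlmem]
  set s₂ : Finset (Fin 4) := s₁.erase l with hs₂
  have hstep2 : (fun x : Fin 4 → Sph d => ∫⁻ yl, B * F ((Function.update x l yl) k)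
        ((Function.update x l yl) l) ∂μ)
      ≤ fun _ => B * B := by
    intro x
    have heval : ∀ yl, F ((Function.update x l yl) k) ((Function.update x l yl) l)
        = F (x k) yl := by
      intro yl
      rw [Function.update_of_ne hkl, Function.update_self]
    simp_rw [heval]
    rw [lintegral_const_mul _ (hFa (x k))]
    exact mul_le_mul_right (hB (x k)) _
  refine lt_of_le_of_lt (lmarginal_mono hstep2 _) ?_
  rw [lmarginal_const'']
  have hμ : μ Set.univ < ⊤ := measure_lt_top μ _
  exact ENNReal.mul_lt_top (ENNReal.mul_lt_top hBtop.lt_top hBtop.lt_top)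
    (ENNReal.pow_lt_top hμ)

lemma sq_rpow_neg {t : ℝ} (ht : 0 ≤ t) (p : ℝ) : (t^2 : ℝ) ^ (-p) = t ^ (-(2*p)) := by
  rw [← Real.rpow_natCast t 2, ← Real.rpow_mul ht]
  congr 1
  push_cast
  ring

lemma cr_bound {p : ℝ} (hp : 0 ≤ p) {x1 x2 x3 x4 : Euc d}
    (h1 : ‖x1‖ = 1) (h2 : ‖x2‖ = 1) (h3 : ‖x3‖ = 1) (h4 : ‖x4‖ = 1) :
    crossRatio x1 x2 x3 x4 ^ p
      ≤ 16^p * (‖x2 - x3‖ ^ (-(2*p)) * ‖x4 - x1‖ ^ (-(2*p))) := by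
  have hu : (0:ℝ) ≤ ‖x2 - x3‖ := norm_nonneg _
  have hv : (0:ℝ) ≤ ‖x4 - x1‖ := norm_nonneg _
  rw [← sq_rpow_neg hu p, ← sq_rpow_neg hv p,
    ← Real.mul_rpow (sq_nonneg _) (sq_nonneg _)]
  set A : ℝ := ‖x1 - x2‖ ^ 2 * ‖x3 - x4‖ ^ 2 with hAdef
  set Bd : ℝ := ‖x2 - x3‖ ^ 2 * ‖x4 - x1‖ ^ 2 with hBdef
  have hA0 : 0 ≤ A := by positivity
  have hB0 : 0 ≤ Bd := by positivity
  have hA16 : A ≤ 16 := by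
    have e1 : ‖x1 - x2‖ ≤ 2 := by
      calc ‖x1 - x2‖ ≤ ‖x1‖ + ‖x2‖ := norm_sub_le _ _
        _ = 2 := by rw [h1, h2]; norm_num
    have e2 : ‖x3 - x4‖ ≤ 2 := by
      calc ‖x3 - x4‖ ≤ ‖x3‖ + ‖x4‖ := norm_sub_le _ _
        _ = 2 := by rw [h3, h4]; norm_num
    have p1 : ‖x1 - x2‖^2 ≤ 4 := by nlinarith [norm_nonneg (x1 - x2)]
    have p2 : ‖x3 - x4‖^2 ≤ 4 := by nlinarith [norm_nonneg (x3 - x4)]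
    nlinarith [sq_nonneg ‖x1 - x2‖, sq_nonneg ‖x3 - x4‖]
  show (A / Bd) ^ p ≤ 16^p * Bd ^ (-p)
  rcases hB0.eq_or_lt with hBeq | hBpos
  · rcases hp.eq_or_lt with hpeq | hppos
    · rw [← hpeq]
      simp
    · rw [← hBeq, div_zero, Real.zero_rpow hppos.ne']
      positivity
  · have step1 : (A / Bd) ^ p ≤ (16 / Bd) ^ p :=
      Real.rpow_le_rpow (by positivity) (by gcongr) hp
    have step2 : ((16:ℝ) / Bd) ^ p = 16^p * Bd ^ (-p) := by
      rw [Real.div_rpow (by norm_num) hB0, Real.rpow_neg hB0, div_eq_mul_inv]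
    rw [← step2]
    exact step1

lemma cr_flip (p : ℝ) (x1 x2 x3 x4 : Euc d) :
    crossRatio x1 x2 x3 x4 ^ p = crossRatio x2 x3 x4 x1 ^ (-p) := by
  unfold crossRatio
  rw [Real.rpow_neg (by positivity), ← Real.inv_rpow (by positivity), inv_div]
  congr 2
  ring

/-- measurability of `x ↦ (N x) ^ s` for a nonnegative measurable `N` -/
lemma meas_rpow {α : Type*} [MeasurableSpace α] {N : α → ℝ} (hN : Measurable N)
    (h0 : ∀ y, 0 ≤ N y) (s : ℝ) : Measurable fun y => (N y) ^ s := by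
  have heq : (fun y => (N y)^s)
      = fun y => if N y = 0 then (0:ℝ)^s else Real.exp (Real.log (N y) * s) := by
    funext y
    by_cases h : N y = 0
    · rw [if_pos h, h]
    · rw [if_neg h, Real.rpow_def_of_pos (lt_of_le_of_ne (h0 y) (Ne.symm h))]
  rw [heq]
  exact Measurable.ite (hN (measurableSet_singleton 0)) measurable_const
    (Real.measurable_exp.comp ((Real.measurable_log.comp hN).mul_const s))

lemma norm_one_of_sph (x : Sph d) : ‖(x : Euc d)‖ = 1 := by
  have := x.2
  simpa [dist_eq_norm] using this

end HpAux

open HpAux in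
/-- if `−d/2 < p < d/2` then `H_p[ρ_uni] < ∞`, i.e. the (unweighted) integral
of the `p`-th power of the cross ratio over `(S^d)⁴` is finite. -/
theorem Hp_uniform_finite_of_lt (d : ℕ) (hd : 1 ≤ d) (p : ℝ)
    (hp₁ : -(d/2 : ℝ) < p) (hp₂ : p < (d/2 : ℝ)) :
    Hp d p (uniDensity d) < ⊤ ∧
    (∫⁻ x : Fin 4 → Sph d,
        ENNReal.ofReal (crossRatio (x 0 : Euc d) (x 1 : Euc d) (x 2 : Euc d) (x 3 : Euc d) ^ p)
        ∂Measure.pi (fun _ => sphereMeasure d)) < ⊤ := by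
  haveI : IsFiniteMeasure (sphereMeasure d) := ⟨sph_univ_lt_top hd⟩
  have key : (∫⁻ x : Fin 4 → Sph d,
      ENNReal.ofReal (crossRatio (x 0 : Euc d) (x 1 : Euc d) (x 2 : Euc d) (x 3 : Euc d) ^ p)
      ∂Measure.pi (fun _ => sphereMeasure d)) < ⊤ := by
    rcases le_or_gt 0 p with hp0 | hp0
    · -- p ≥ 0
      have hs0 : (0:ℝ) ≤ 2*p := by linarith
      have hsd : 2*p < (d:ℝ) := by linarith
      obtain ⟨B, hBtop, hB⟩ := si hd hs0 hsd
      set F : Sph d → Sph d → ℝ≥0∞ :=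
        fun a b => ENNReal.ofReal (‖(a:Euc d) - (b:Euc d)‖ ^ (-(2*p))) with hFdef
      have hFmeas : Measurable (Function.uncurry F) := by
        apply Measurable.ennreal_ofReal
        exact meas_rpow (N := fun q : Sph d × Sph d => ‖(q.1:Euc d) - (q.2:Euc d)‖)
          (((continuous_subtype_val.comp continuous_fst).sub
            (continuous_subtype_val.comp continuous_snd)).norm.measurable)
          (fun y => norm_nonneg _) (-(2*p))
      have hptb : ∀ x : Fin 4 → Sph d,
          ENNReal.ofReal (crossRatio (x 0 : Euc d) (x 1 : Euc d) (x 2 : Euc d) (x 3 : Euc d) ^ p)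
          ≤ ENNReal.ofReal ((16:ℝ)^p) * (F (x 1) (x 2) * F (x 3) (x 0)) := by
        intro x
        have hb := cr_bound hp0 (norm_one_of_sph (x 0)) (norm_one_of_sph (x 1))
          (norm_one_of_sph (x 2)) (norm_one_of_sph (x 3))
        refine le_trans (ENNReal.ofReal_le_ofReal hb) ?_
        rw [ENNReal.ofReal_mul (by positivity), ENNReal.ofReal_mul (by positivity)]
      calc (∫⁻ x : Fin 4 → Sph d,
          ENNReal.ofReal (crossRatio (x 0 : Euc d) (x 1 : Euc d) (x 2 : Euc d) (x 3 : Euc d) ^ p)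
          ∂Measure.pi (fun _ => sphereMeasure d))
          ≤ ∫⁻ x : Fin 4 → Sph d, ENNReal.ofReal ((16:ℝ)^p) * (F (x 1) (x 2) * F (x 3) (x 0))
            ∂Measure.pi (fun _ => sphereMeasure d) := lintegral_mono hptb
        _ = ENNReal.ofReal ((16:ℝ)^p) * ∫⁻ x : Fin 4 → Sph d, F (x 1) (x 2) * F (x 3) (x 0)
            ∂Measure.pi (fun _ => sphereMeasure d) :=
          lintegral_const_mul' _ _ ENNReal.ofReal_ne_top
        _ < ⊤ := ENNReal.mul_lt_top ENNReal.ofReal_lt_top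
          (four_bound B hBtop F hFmeas hB 1 2 3 0 (by decide) (by decide) (by decide) (by decide))
    · -- p < 0
      have hs0 : (0:ℝ) ≤ 2*(-p) := by linarith
      have hsd : 2*(-p) < (d:ℝ) := by linarith
      obtain ⟨B, hBtop, hB⟩ := si hd hs0 hsd
      set F : Sph d → Sph d → ℝ≥0∞ :=
        fun a b => ENNReal.ofReal (‖(a:Euc d) - (b:Euc d)‖ ^ (-(2*(-p)))) with hFdef
      have hFmeas : Measurable (Function.uncurry F) := by
        apply Measurable.ennreal_ofReal
        exact meas_rpow (N := fun q : Sph d × Sph d => ‖(q.1:Euc d) - (q.2:Euc d)‖)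
          (((continuous_subtype_val.comp continuous_fst).sub
            (continuous_subtype_val.comp continuous_snd)).norm.measurable)
          (fun y => norm_nonneg _) (-(2*(-p)))
      have hptb : ∀ x : Fin 4 → Sph d,
          ENNReal.ofReal (crossRatio (x 0 : Euc d) (x 1 : Euc d) (x 2 : Euc d) (x 3 : Euc d) ^ p)
          ≤ ENNReal.ofReal ((16:ℝ)^(-p)) * (F (x 2) (x 3) * F (x 0) (x 1)) := by
        intro x
        rw [cr_flip p]
        have hb := cr_bound (neg_nonneg.mpr hp0.le) (norm_one_of_sph (x 1))
          (norm_one_of_sph (x 2)) (norm_one_of_sph (x 3)) (norm_one_of_sph (x 0))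
        refine le_trans (ENNReal.ofReal_le_ofReal hb) ?_
        rw [ENNReal.ofReal_mul (by positivity), ENNReal.ofReal_mul (by positivity)]
      calc (∫⁻ x : Fin 4 → Sph d,
          ENNReal.ofReal (crossRatio (x 0 : Euc d) (x 1 : Euc d) (x 2 : Euc d) (x 3 : Euc d) ^ p)
          ∂Measure.pi (fun _ => sphereMeasure d))
          ≤ ∫⁻ x : Fin 4 → Sph d, ENNReal.ofReal ((16:ℝ)^(-p)) * (F (x 2) (x 3) * F (x 0) (x 1))
            ∂Measure.pi (fun _ => sphereMeasure d) := lintegral_mono hptb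
        _ = ENNReal.ofReal ((16:ℝ)^(-p)) * ∫⁻ x : Fin 4 → Sph d, F (x 2) (x 3) * F (x 0) (x 1)
            ∂Measure.pi (fun _ => sphereMeasure d) :=
          lintegral_const_mul' _ _ ENNReal.ofReal_ne_top
        _ < ⊤ := ENNReal.mul_lt_top ENNReal.ofReal_lt_top
          (four_bound B hBtop F hFmeas hB 2 3 0 1 (by decide) (by decide) (by decide) (by decide))
  refine ⟨?_, key⟩
  unfold Hp uniDensity
  have hprod : (∏ _i : Fin 4, ENNReal.ofReal ((sphereMeasure d Set.univ).toReal⁻¹))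
      = (ENNReal.ofReal ((sphereMeasure d Set.univ).toReal⁻¹))^4 := by
    rw [Finset.prod_const, Finset.card_univ, Fintype.card_fin]
  simp_rw [hprod]
  rw [lintegral_mul_const' _ _ (by
    exact ENNReal.pow_ne_top ENNReal.ofReal_ne_top)]
  exact ENNReal.mul_lt_top key (ENNReal.pow_lt_top ENNReal.ofReal_lt_top)
end

section
/- Let d ≥ 1, let Ω be a skew-symmetric (d+1)×(d+1) real matrix, let ρ be a probability density on S^d, set x_c = ∫_{S^d} y ρ(y) dσ(y) ∈ ℝ^{d+1}, and define v(y) = Ωy + x_c − ⟨y, x_c⟩y for y ∈ S^d. Then ∫_{S^d} ⟨v(y), x_c − ⟨x_c,y⟩y⟩ ρ(y) dσ(y) = ∫_{S^d} ‖x_c − ⟨y, x_c⟩y‖² ρ(y) dσ(y) ≥ 0. -/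
open MeasureTheory Metric Filter Matrix
open scoped RealInnerProductSpace ENNReal

section aux
variable {d : ℕ}

lemma aux_int_mul {ρ g : Sph d → ℝ} (hρInt : Integrable ρ (sphereMeasure d))
    (hρc : Continuous ρ) (hg : Continuous g) :
    Integrable (fun y => g y * ρ y) (sphereMeasure d) := by
  obtain ⟨C, hC⟩ : ∃ C, ∀ y : Sph d, ‖g y‖ ≤ C := by
    obtain ⟨C, hC⟩ := (isCompact_univ.image hg.norm).bddAbove
    exact ⟨C, fun y => hC ⟨y, Set.mem_univ y, rfl⟩⟩
  refine (hρInt.norm.const_mul C).mono' (hg.mul hρc).aestronglyMeasurable ?_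
  filter_upwards with y
  calc ‖g y * ρ y‖ = ‖g y‖ * ‖ρ y‖ := abs_mul _ _
    _ ≤ C * ‖ρ y‖ := by
        exact mul_le_mul_of_nonneg_right (hC y) (norm_nonneg _)

lemma aux_skew {Ω : Matrix (Fin (d+1)) (Fin (d+1)) ℝ} (hΩ : Ωᵀ = -Ω)
    (w z : Euc d) : ⟪Matrix.toEuclideanLin Ω w, z⟫ = -⟪w, Matrix.toEuclideanLin Ω z⟫ := by
  have h : Matrix.toEuclideanLin Ωᴴ = LinearMap.adjoint (Matrix.toEuclideanLin Ω) :=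
    Matrix.toEuclideanLin_conjTranspose_eq_adjoint Ω
  have hH : (Ωᴴ : Matrix _ _ ℝ) = -Ω := by
    simpa [Matrix.conjTranspose_eq_transpose_of_trivial] using hΩ
  rw [hH] at h
  have := LinearMap.adjoint_inner_right (Matrix.toEuclideanLin Ω) w z
  rw [← h] at this
  simp only [map_neg, LinearMap.neg_apply, inner_neg_right] at this
  linarith [this]

lemma aux_skew_self {Ω : Matrix (Fin (d+1)) (Fin (d+1)) ℝ} (hΩ : Ωᵀ = -Ω)
    (w : Euc d) : ⟪Matrix.toEuclideanLin Ω w, w⟫ = 0 := by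
  have h := aux_skew hΩ w w
  have h2 : ⟪w, Matrix.toEuclideanLin Ω w⟫ = ⟪Matrix.toEuclideanLin Ω w, w⟫ :=
    real_inner_comm _ _
  linarith

end aux

/-- the identity behind the derivative formula for the order parameter of the
kinetic swarm sphere model:
`∫ ⟨v(y), x_c − ⟨x_c,y⟩y⟩ ρ(y) dσ = ∫ ‖x_c − ⟨y,x_c⟩y‖² ρ(y) dσ ≥ 0`. -/
theorem order_parameter_derivative_identity
    (d : ℕ) (hd : 1 ≤ d)
    (Ω : Matrix (Fin (d+1)) (Fin (d+1)) ℝ) (hΩ : Ωᵀ = -Ω)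
    (ρ : Sph d → ℝ) (hρ : IsProbDensity d ρ)
    (xc : Euc d) (hxc : xc = ∫ y : Sph d, ρ y • (y : Euc d) ∂sphereMeasure d)
    (v : Sph d → Euc d)
    (hv : ∀ y : Sph d, v y = Matrix.toEuclideanLin Ω (y : Euc d) + xc
      - ⟪(y : Euc d), xc⟫ • (y : Euc d)) :
    (∫ y : Sph d, ⟪v y, xc - ⟪xc, (y : Euc d)⟫ • (y : Euc d)⟫ * ρ y ∂sphereMeasure d)
      = ∫ y : Sph d, ‖xc - ⟪(y : Euc d), xc⟫ • (y : Euc d)‖ ^ 2 * ρ y ∂sphereMeasure d ∧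
    0 ≤ ∫ y : Sph d, ‖xc - ⟪(y : Euc d), xc⟫ • (y : Euc d)‖ ^ 2 * ρ y ∂sphereMeasure d := by
  obtain ⟨hρc, hρ0, hρ1⟩ := hρ
  set A := Matrix.toEuclideanLin Ω with hA
  have hAc : Continuous fun y : Sph d => A (y : Euc d) :=
    (LinearMap.continuous_of_finiteDimensional A).comp continuous_subtype_val
  -- ρ is integrable (else its integral would be 0 ≠ 1)
  have hρInt : Integrable ρ (sphereMeasure d) := by
    by_contra h
    rw [integral_undef h] at hρ1
    norm_num at hρ1
  -- integrability of ρ y • y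
  have hIntv : Integrable (fun y : Sph d => ρ y • (y : Euc d)) (sphereMeasure d) := by
    refine hρInt.norm.mono' ((hρc.smul continuous_subtype_val).aestronglyMeasurable) ?_
    filter_upwards with y
    have : ‖(y : Euc d)‖ = 1 := by simpa using mem_sphere_zero_iff_norm.mp y.2
    simp [norm_smul, this]
  -- pointwise identity
  have hpt : ∀ y : Sph d,
      ⟪v y, xc - ⟪xc, (y : Euc d)⟫ • (y : Euc d)⟫
        = ⟪A (y : Euc d), xc⟫ + ‖xc - ⟪(y : Euc d), xc⟫ • (y : Euc d)‖ ^ 2 := by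
    intro y
    have hsymm : ⟪(y : Euc d), xc⟫ = ⟪xc, (y : Euc d)⟫ := real_inner_comm _ _
    rw [hv y, hsymm]
    set P : Euc d := xc - ⟪xc, (y : Euc d)⟫ • (y : Euc d) with hP
    have : (A (y : Euc d) + xc - ⟪xc, (y : Euc d)⟫ • (y : Euc d)) = A (y : Euc d) + P := by
      rw [hP]; abel
    rw [this, inner_add_left, ← real_inner_self_eq_norm_sq, hP,
      inner_sub_right, real_inner_smul_right, aux_skew_self hΩ]
    ring_nf
  -- integrability of the two scalar integrands
  have hInt1 : Integrable (fun y : Sph d => ⟪A (y : Euc d), xc⟫ * ρ y) (sphereMeasure d) :=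
    aux_int_mul hρInt hρc (Continuous.inner hAc continuous_const)
  have hInt2 : Integrable
      (fun y : Sph d => ‖xc - ⟪(y : Euc d), xc⟫ • (y : Euc d)‖ ^ 2 * ρ y) (sphereMeasure d) := by
    refine aux_int_mul hρInt hρc ?_
    exact (continuous_const.sub
      (by fun_prop : Continuous fun y : Sph d => ⟪(y : Euc d), xc⟫ • (y : Euc d))).norm.pow 2
  -- the Ω term integrates to zero
  have hzero : ∫ y : Sph d, ⟪A (y : Euc d), xc⟫ * ρ y ∂sphereMeasure d = 0 := by
    have hrw : ∀ y : Sph d, ⟪A (y : Euc d), xc⟫ * ρ y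
        = -(innerSL ℝ (A xc)) (ρ y • (y : Euc d)) := by
      intro y
      have h1 : ⟪A (y : Euc d), xc⟫ = -⟪(y : Euc d), A xc⟫ := aux_skew hΩ _ _
      simp [h1, real_inner_smul_right, real_inner_comm (A xc)]
      ring
    simp_rw [hrw]
    rw [integral_neg, ContinuousLinearMap.integral_comp_comm _ hIntv, ← hxc]
    have : ⟪A xc, xc⟫ = 0 := aux_skew_self hΩ xc
    simp [this]
  -- nonnegativity
  have hnn : 0 ≤ ∫ y : Sph d, ‖xc - ⟪(y : Euc d), xc⟫ • (y : Euc d)‖ ^ 2 * ρ y ∂sphereMeasure d :=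
    integral_nonneg fun y => mul_nonneg (sq_nonneg _) (hρ0 y)
  refine ⟨?_, hnn⟩
  calc ∫ y : Sph d, ⟪v y, xc - ⟪xc, (y : Euc d)⟫ • (y : Euc d)⟫ * ρ y ∂sphereMeasure d
      = ∫ y : Sph d, (⟪A (y : Euc d), xc⟫ * ρ y
          + ‖xc - ⟪(y : Euc d), xc⟫ • (y : Euc d)‖ ^ 2 * ρ y) ∂sphereMeasure d := by
        congr 1; funext y; rw [hpt y]; ring
    _ = _ := by rw [integral_add hInt1 hInt2, hzero, zero_add]
end

section
/- Let d ≥ 1. Let (ρ_t)_{t≥0} be a family of probability densities on S^d, let γ : [0,∞) → S^d, define R(t) = ∫_{S^d} ⟨y, γ(t)⟩ ρ_t(y) dσ(y), and assume: R(t) > 0 for all t ≥ 0; R(t) → R^∞ as t → ∞ for some R^∞ ∈ (0,1]; and ∫_{S^d} (1 − ⟨y, γ(t)⟩²) ρ_t(y) dσ(y) → 0 as t → ∞. Then for every ε ∈ (0, √2): ∫_{B_ε(γ(t))} ρ_t dσ → (1 + R^∞)/2 and ∫_{B_ε(−γ(t))} ρ_t dσ → (1 − R^∞)/2 as t → ∞.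 -/
open MeasureTheory Metric Filter Matrix
open scoped RealInnerProductSpace ENNReal

set_option maxHeartbeats 800000 in
lemma key {d : ℕ} (ρ : Sph d → ℝ) (hcont : Continuous ρ) (hpos : ∀ x, 0 ≤ ρ x)
    (hmass : ∫ x, ρ x ∂sphereMeasure d = 1) (g : Sph d) (δ : ℝ) (hδ0 : 0 < δ) (hδ1 : δ < 1) :
    |(∫ y in {y : Sph d | δ < ⟪(y : Euc d), (g : Euc d)⟫}, ρ y ∂sphereMeasure d)
      - (∫ y in {y : Sph d | ⟪(y : Euc d), (g : Euc d)⟫ < -δ}, ρ y ∂sphereMeasure d)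
      - ∫ y, ⟪(y : Euc d), (g : Euc d)⟫ * ρ y ∂sphereMeasure d|
      ≤ (1 - δ^2)⁻¹ * ∫ y, (1 - ⟪(y : Euc d), (g : Euc d)⟫ ^ 2) * ρ y ∂sphereMeasure d
    ∧ |(∫ y in {y : Sph d | δ < ⟪(y : Euc d), (g : Euc d)⟫}, ρ y ∂sphereMeasure d)
      + (∫ y in {y : Sph d | ⟪(y : Euc d), (g : Euc d)⟫ < -δ}, ρ y ∂sphereMeasure d) - 1|
      ≤ (1 - δ^2)⁻¹ * ∫ y, (1 - ⟪(y : Euc d), (g : Euc d)⟫ ^ 2) * ρ y ∂sphereMeasure d := by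
  set μ := sphereMeasure d
  set f : Sph d → ℝ := fun y => ⟪(y : Euc d), (g : Euc d)⟫ with hf
  have hfcont : Continuous f := (continuous_subtype_val).inner continuous_const
  have hf1 : ∀ y, |f y| ≤ 1 := by
    intro y
    calc |f y| ≤ ‖(y : Euc d)‖ * ‖(g : Euc d)‖ := abs_real_inner_le_norm _ _
    _ = 1 := by rw [norm_eq_of_mem_sphere, norm_eq_of_mem_sphere]; norm_num
  set A : Set (Sph d) := {y | δ < f y} with hA
  set B : Set (Sph d) := {y | f y < -δ} with hB
  set M : Set (Sph d) := (A ∪ B)ᶜ with hM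
  have mA : MeasurableSet A := (isOpen_lt continuous_const hfcont).measurableSet
  have mB : MeasurableSet B := (isOpen_lt hfcont continuous_const).measurableSet
  have mM : MeasurableSet M := (mA.union mB).compl
  have disjAB : Disjoint A B := by
    rw [Set.disjoint_left]
    intro y hyA hyB
    simp only [hA, hB, Set.mem_setOf_eq] at hyA hyB
    linarith
  have h1δ : (0:ℝ) < 1 - δ^2 := by nlinarith
  have hc0 : (0:ℝ) ≤ (1 - δ^2)⁻¹ := by positivity
  have hIρ : Integrable ρ μ := by
    by_contra h
    rw [integral_undef h] at hmass; exact one_ne_zero hmass.symm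
  have hIf : Integrable (fun y => f y * ρ y) μ :=
    hIρ.bdd_mul hfcont.aestronglyMeasurable (c := 1) (ae_of_all _ fun y => by
      rw [Real.norm_eq_abs]; exact hf1 y)
  have hsq : ∀ y, f y ^ 2 ≤ 1 := by
    intro y
    nlinarith [sq_abs (f y), abs_nonneg (f y), hf1 y]
  have hIv : Integrable (fun y => (1 - f y ^ 2) * ρ y) μ :=
    hIρ.bdd_mul (continuous_const.sub (hfcont.pow 2)).aestronglyMeasurable (c := 1) (ae_of_all _ fun y => by
      have h1 := hsq y
      have h2 := sq_nonneg (f y)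
      rw [Real.norm_eq_abs, abs_le]
      constructor <;> linarith)
  have split : ∀ (h : Sph d → ℝ), Integrable h μ →
      ∫ y, h y ∂μ = (∫ y in A, h y ∂μ) + (∫ y in B, h y ∂μ) + (∫ y in M, h y ∂μ) := by
    intro h hh
    have h1 : ∫ y in A ∪ B, h y ∂μ = (∫ y in A, h y ∂μ) + ∫ y in B, h y ∂μ :=
      setIntegral_union disjAB mB hh.integrableOn hh.integrableOn
    have h2 : ∫ y in (A ∪ B) ∪ M, h y ∂μ = (∫ y in A ∪ B, h y ∂μ) + ∫ y in M, h y ∂μ :=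
      setIntegral_union disjoint_compl_right mM hh.integrableOn hh.integrableOn
    rw [hM, Set.union_compl_self] at h2
    rw [← setIntegral_univ (μ := μ), h2, h1]
  -- V nonneg pointwise
  have hvpt : ∀ y, 0 ≤ (1 - f y ^ 2) * ρ y := by
    intro y
    have := hf1 y
    have h1 := hsq y
    have h2 := hpos y
    nlinarith
  set V := ∫ y, (1 - f y ^ 2) * ρ y ∂μ with hV
  -- bound on M : ρ ≤ c (1-f²) ρ pointwise on M
  have hMpt : ∀ y ∈ M, ρ y ≤ (1 - δ^2)⁻¹ * ((1 - f y ^ 2) * ρ y) := by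
    intro y hy
    simp only [hM, hA, hB, Set.mem_compl_iff, Set.mem_union, Set.mem_setOf_eq, not_or, not_lt] at hy
    rw [inv_mul_eq_div, le_div_iff₀ h1δ]
    nlinarith [mul_nonneg (mul_nonneg (sub_nonneg.2 hy.1) (by linarith [hy.2] : (0:ℝ) ≤ δ + f y)) (hpos y)]
  have hsubV : ∀ (S : Set (Sph d)), (∫ y in S, (1 - f y ^ 2) * ρ y ∂μ) ≤ V :=
    fun S => setIntegral_le_integral hIv (ae_of_all _ hvpt)
  have hMint : (∫ y in M, ρ y ∂μ) ≤ (1 - δ^2)⁻¹ * V := by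
    calc (∫ y in M, ρ y ∂μ) ≤ ∫ y in M, (1 - δ^2)⁻¹ * ((1 - f y ^ 2) * ρ y) ∂μ :=
          setIntegral_mono_on hIρ.integrableOn ((hIv.integrableOn).const_mul _) mM hMpt
      _ = (1 - δ^2)⁻¹ * ∫ y in M, (1 - f y ^ 2) * ρ y ∂μ := integral_const_mul _ _
      _ ≤ (1 - δ^2)⁻¹ * V := by
          exact mul_le_mul_of_nonneg_left (hsubV M) hc0
  have hMnn : 0 ≤ ∫ y in M, ρ y ∂μ := setIntegral_nonneg mM fun y _ => hpos y
  have hsum := split ρ hIρ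
  rw [hmass] at hsum
  constructor
  · -- first bound
    have hfs := split _ hIf
    -- ∫_A (ρ - fρ)
    have eA : (∫ y in A, ρ y ∂μ) - (∫ y in A, f y * ρ y ∂μ)
        = ∫ y in A, (1 - f y) * ρ y ∂μ := by
      rw [← integral_sub hIρ.integrableOn hIf.integrableOn]
      congr 1; ext y; ring
    have eB : (∫ y in B, ρ y ∂μ) + (∫ y in B, f y * ρ y ∂μ)
        = ∫ y in B, (1 + f y) * ρ y ∂μ := by
      rw [← integral_add hIρ.integrableOn hIf.integrableOn]
      congr 1; ext y; ring
    have bA : (∫ y in A, (1 - f y) * ρ y ∂μ) ≤ (1 - δ^2)⁻¹ * ∫ y in A, (1 - f y ^ 2) * ρ y ∂μ := by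
      rw [← integral_const_mul]
      refine setIntegral_mono_on (hIρ.bdd_mul
        (continuous_const.sub hfcont).aestronglyMeasurable (c := 2) (ae_of_all _ fun y => by
          have h2 := abs_le.mp (hf1 y); rw [Real.norm_eq_abs, abs_le]; simp only [Pi.sub_apply, Pi.add_apply]
          constructor <;> linarith [h2.1, h2.2])).integrableOn
        ((hIv.const_mul _).integrableOn) mA ?_
      intro y hy
      simp only [hA, Set.mem_setOf_eq] at hy
      rw [inv_mul_eq_div, le_div_iff₀ h1δ]
      have h2 := abs_le.mp (hf1 y)
      nlinarith [mul_nonneg (mul_nonneg (by linarith [h2.2] : (0:ℝ) ≤ 1 - f y)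
        (by nlinarith : (0:ℝ) ≤ f y + δ ^ 2)) (hpos y)]
    have bB : (∫ y in B, (1 + f y) * ρ y ∂μ) ≤ (1 - δ^2)⁻¹ * ∫ y in B, (1 - f y ^ 2) * ρ y ∂μ := by
      rw [← integral_const_mul]
      refine setIntegral_mono_on (hIρ.bdd_mul
        (continuous_const.add hfcont).aestronglyMeasurable (c := 2) (ae_of_all _ fun y => by
          have h2 := abs_le.mp (hf1 y); rw [Real.norm_eq_abs, abs_le]; simp only [Pi.sub_apply, Pi.add_apply]
          constructor <;> linarith [h2.1, h2.2])).integrableOn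
        ((hIv.const_mul _).integrableOn) mB ?_
      intro y hy
      simp only [hB, Set.mem_setOf_eq] at hy
      rw [inv_mul_eq_div, le_div_iff₀ h1δ]
      have h2 := abs_le.mp (hf1 y)
      nlinarith [mul_nonneg (mul_nonneg (by linarith [h2.1] : (0:ℝ) ≤ 1 + f y)
        (by nlinarith : (0:ℝ) ≤ δ ^ 2 - f y)) (hpos y)]
    have nA : 0 ≤ ∫ y in A, (1 - f y) * ρ y ∂μ :=
      setIntegral_nonneg mA fun y _ => by
        have h1 := hpos y; have h2 := abs_le.mp (hf1 y); nlinarith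
    have nB : 0 ≤ ∫ y in B, (1 + f y) * ρ y ∂μ :=
      setIntegral_nonneg mB fun y _ => by
        have h1 := hpos y; have h2 := abs_le.mp (hf1 y); nlinarith
    have bM : |∫ y in M, f y * ρ y ∂μ| ≤ (1 - δ^2)⁻¹ * ∫ y in M, (1 - f y ^ 2) * ρ y ∂μ := by
      have habs : |∫ y in M, f y * ρ y ∂μ| ≤ ∫ y in M, |f y| * |ρ y| ∂μ := by
        simpa [Real.norm_eq_abs] using
          norm_integral_le_integral_norm (μ := μ.restrict M) (f := fun y => f y * ρ y)
      refine habs.trans ?_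
      rw [← integral_const_mul]
      refine setIntegral_mono_on (by simpa [abs_mul] using hIf.abs.integrableOn)
        ((hIv.const_mul _).integrableOn) mM ?_
      intro y hy
      simp only [hM, hA, hB, Set.mem_compl_iff, Set.mem_union, Set.mem_setOf_eq, not_or, not_lt] at hy
      rw [abs_of_nonneg (hpos y), inv_mul_eq_div, le_div_iff₀ h1δ]
      have h2 : |f y| ≤ δ := abs_le.mpr ⟨hy.2, hy.1⟩
      have h3 : |f y| * ρ y ≤ ρ y := by
        have := mul_le_mul_of_nonneg_right (h2.trans hδ1.le) (hpos y)
        linarith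
      have h4 : ρ y * (1 - δ^2) ≤ (1 - f y ^ 2) * ρ y := by
        nlinarith [mul_nonneg (mul_nonneg (sub_nonneg.2 hy.1) (by linarith [hy.2] : (0:ℝ) ≤ δ + f y)) (hpos y)]
      have h5 := mul_le_mul_of_nonneg_right h3 h1δ.le
      linarith
    have splitV := split _ hIv
    have VA := hsubV A
    have VB := hsubV B
    have VM := hsubV M
    have nVA : 0 ≤ ∫ y in A, (1 - f y ^ 2) * ρ y ∂μ := setIntegral_nonneg mA fun y _ => hvpt y
    have nVB : 0 ≤ ∫ y in B, (1 - f y ^ 2) * ρ y ∂μ := setIntegral_nonneg mB fun y _ => hvpt y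
    have nVM : 0 ≤ ∫ y in M, (1 - f y ^ 2) * ρ y ∂μ := setIntegral_nonneg mM fun y _ => hvpt y
    rw [hfs]
    have expand : (∫ y in A, ρ y ∂μ) - (∫ y in B, ρ y ∂μ)
        - ((∫ y in A, f y * ρ y ∂μ) + (∫ y in B, f y * ρ y ∂μ) + (∫ y in M, f y * ρ y ∂μ))
        = (∫ y in A, (1 - f y) * ρ y ∂μ) - (∫ y in B, (1 + f y) * ρ y ∂μ)
          - (∫ y in M, f y * ρ y ∂μ) := by
      rw [← eA, ← eB]; ring
    rw [expand]
    have hXY : (∫ y in A, (1 - f y) * ρ y ∂μ) + (∫ y in B, (1 + f y) * ρ y ∂μ)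
        + |∫ y in M, f y * ρ y ∂μ| ≤ (1 - δ^2)⁻¹ * V := by
      calc (∫ y in A, (1 - f y) * ρ y ∂μ) + (∫ y in B, (1 + f y) * ρ y ∂μ)
            + |∫ y in M, f y * ρ y ∂μ|
          ≤ (1 - δ^2)⁻¹ * (∫ y in A, (1 - f y ^ 2) * ρ y ∂μ)
            + (1 - δ^2)⁻¹ * (∫ y in B, (1 - f y ^ 2) * ρ y ∂μ)
            + (1 - δ^2)⁻¹ * (∫ y in M, (1 - f y ^ 2) * ρ y ∂μ) :=
            add_le_add (add_le_add bA bB) bM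
        _ = (1 - δ^2)⁻¹ * V := by rw [hV, splitV]; ring
    rw [abs_le]
    have hz1 := le_abs_self (∫ y in M, f y * ρ y ∂μ)
    have hz2 := neg_abs_le (∫ y in M, f y * ρ y ∂μ)
    constructor
    · linarith
    · linarith
  · -- second bound
    have : (∫ y in A, ρ y ∂μ) + (∫ y in B, ρ y ∂μ) - 1 = -(∫ y in M, ρ y ∂μ) := by
      linarith [hsum]
    rw [this, abs_neg, abs_of_nonneg hMnn]
    exact hMint

/-- emergence of a bipolar state: under the stated hypotheses on the order
parameter `R(t) = ∫ ⟨y, γ(t)⟩ ρ_t(y) dσ(y)`, the mass concentrates at `γ(t)` and `−γ(t)`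
with weights `(1 ± R^∞)/2`. -/
theorem bipolar_concentration
    (d : ℕ) (hd : 1 ≤ d)
    (ρ : ℝ → Sph d → ℝ) (hρ : ∀ t ≥ (0:ℝ), IsProbDensity d (ρ t))
    (γ : ℝ → Sph d) (R : ℝ → ℝ)
    (hR : ∀ t, R t = ∫ y : Sph d, ⟪(y : Euc d), (γ t : Euc d)⟫ * ρ t y ∂sphereMeasure d)
    (hRpos : ∀ t ≥ (0:ℝ), 0 < R t)
    (Rinf : ℝ) (hRinf : Rinf ∈ Set.Ioc (0:ℝ) 1)
    (hRconv : Filter.Tendsto R Filter.atTop (nhds Rinf))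
    (hvar : Filter.Tendsto
      (fun t => ∫ y : Sph d, (1 - ⟪(y : Euc d), (γ t : Euc d)⟫ ^ 2) * ρ t y ∂sphereMeasure d)
      Filter.atTop (nhds 0)) :
    ∀ ε ∈ Set.Ioo (0:ℝ) (Real.sqrt 2),
      Filter.Tendsto
        (fun t => ∫ y in {y : Sph d | ‖(γ t : Euc d) - (y : Euc d)‖ < ε}, ρ t y
          ∂sphereMeasure d) Filter.atTop (nhds ((1 + Rinf)/2)) ∧
      Filter.Tendsto
        (fun t => ∫ y in {y : Sph d | ‖-(γ t : Euc d) - (y : Euc d)‖ < ε}, ρ t y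
          ∂sphereMeasure d) Filter.atTop (nhds ((1 - Rinf)/2)) := by
  intro ε hε
  obtain ⟨hε0, hε2⟩ := hε
  have hε2' : ε ^ 2 < 2 := by
    have := (Real.lt_sqrt hε0.le).mp hε2
    linarith
  set δ : ℝ := 1 - ε ^ 2 / 2 with hδdef
  have hδ0 : 0 < δ := by simp only [hδdef]; linarith
  have hδ1 : δ < 1 := by simp only [hδdef]; nlinarith
  set c : ℝ := (1 - δ ^ 2)⁻¹ with hcdef
  set V : ℝ → ℝ :=
    fun t => ∫ y : Sph d, (1 - ⟪(y : Euc d), (γ t : Euc d)⟫ ^ 2) * ρ t y ∂sphereMeasure d with hVdef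
  -- set identities
  have hsetA : ∀ t, {y : Sph d | ‖(γ t : Euc d) - (y : Euc d)‖ < ε}
      = {y : Sph d | δ < ⟪(y : Euc d), (γ t : Euc d)⟫} := by
    intro t
    ext y
    simp only [Set.mem_setOf_eq]
    have hnγ : ‖(γ t : Euc d)‖ = 1 := norm_eq_of_mem_sphere _
    have hny : ‖(y : Euc d)‖ = 1 := norm_eq_of_mem_sphere _
    have hsq : ‖(γ t : Euc d) - (y : Euc d)‖ ^ 2 = 2 - 2 * ⟪(y : Euc d), (γ t : Euc d)⟫ := by
      rw [norm_sub_sq_real, hnγ, hny, real_inner_comm]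
      ring
    constructor
    · intro h
      have h2 : ‖(γ t : Euc d) - (y : Euc d)‖ ^ 2 < ε ^ 2 :=
        pow_lt_pow_left₀ h (norm_nonneg _) two_ne_zero
      rw [hsq] at h2
      simp only [hδdef]; linarith
    · intro h
      have h2 : ‖(γ t : Euc d) - (y : Euc d)‖ ^ 2 < ε ^ 2 := by
        rw [hsq]; simp only [hδdef] at h; linarith
      nlinarith [norm_nonneg ((γ t : Euc d) - (y : Euc d))]
  have hsetB : ∀ t, {y : Sph d | ‖-(γ t : Euc d) - (y : Euc d)‖ < ε}
      = {y : Sph d | ⟪(y : Euc d), (γ t : Euc d)⟫ < -δ} := by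
    intro t
    ext y
    simp only [Set.mem_setOf_eq]
    have hnγ : ‖(γ t : Euc d)‖ = 1 := norm_eq_of_mem_sphere _
    have hny : ‖(y : Euc d)‖ = 1 := norm_eq_of_mem_sphere _
    have hneg : ‖-(γ t : Euc d) - (y : Euc d)‖ = ‖(γ t : Euc d) + (y : Euc d)‖ := by
      rw [show -(γ t : Euc d) - (y : Euc d) = -((γ t : Euc d) + (y : Euc d)) by abel, norm_neg]
    have hsq : ‖(γ t : Euc d) + (y : Euc d)‖ ^ 2 = 2 + 2 * ⟪(y : Euc d), (γ t : Euc d)⟫ := by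
      rw [norm_add_sq_real, hnγ, hny, real_inner_comm]
      ring
    rw [hneg]
    constructor
    · intro h
      have h2 : ‖(γ t : Euc d) + (y : Euc d)‖ ^ 2 < ε ^ 2 :=
        pow_lt_pow_left₀ h (norm_nonneg _) two_ne_zero
      rw [hsq] at h2
      simp only [hδdef]; linarith
    · intro h
      have h2 : ‖(γ t : Euc d) + (y : Euc d)‖ ^ 2 < ε ^ 2 := by
        rw [hsq]; simp only [hδdef] at h; linarith
      nlinarith [norm_nonneg ((γ t : Euc d) + (y : Euc d))]
  set a : ℝ → ℝ := fun t => ∫ y in {y : Sph d | ‖(γ t : Euc d) - (y : Euc d)‖ < ε}, ρ t y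
      ∂sphereMeasure d with hadef
  set b : ℝ → ℝ := fun t => ∫ y in {y : Sph d | ‖-(γ t : Euc d) - (y : Euc d)‖ < ε}, ρ t y
      ∂sphereMeasure d with hbdef
  have hkey : ∀ᶠ t in atTop, |a t - b t - R t| ≤ c * V t ∧ |a t + b t - 1| ≤ c * V t := by
    filter_upwards [eventually_ge_atTop (0:ℝ)] with t ht
    obtain ⟨hcont, hpos, hmass⟩ := hρ t ht
    have := key (ρ t) hcont hpos hmass (γ t) δ hδ0 hδ1
    simp only [hadef, hbdef, hsetA t, hsetB t, hR t]
    exact this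
  have hcV : Tendsto (fun t => c * V t) atTop (nhds 0) := by
    have := hvar.const_mul c
    simpa using this
  have hb1 : ∀ᶠ t in atTop, ‖a t - b t - R t‖ ≤ c * V t := by
    filter_upwards [hkey] with t ht
    rw [Real.norm_eq_abs]; exact ht.1
  have hb2 : ∀ᶠ t in atTop, ‖a t + b t - 1‖ ≤ c * V t := by
    filter_upwards [hkey] with t ht
    rw [Real.norm_eq_abs]; exact ht.2
  have hd1 : Tendsto (fun t => a t - b t - R t) atTop (nhds 0) :=
    squeeze_zero_norm' hb1 hcV
  have hd2 : Tendsto (fun t => a t + b t - 1) atTop (nhds 0) :=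
    squeeze_zero_norm' hb2 hcV
  have hAB : Tendsto (fun t => a t - b t) atTop (nhds Rinf) := by
    have := hd1.add hRconv
    simp only [sub_add_cancel] at this
    simpa using this
  have hS : Tendsto (fun t => a t + b t) atTop (nhds 1) := by
    have := hd2.add (tendsto_const_nhds : Tendsto (fun _ : ℝ => (1:ℝ)) atTop (nhds 1))
    simp only [sub_add_cancel] at this
    simpa using this
  constructor
  · have := (hS.add hAB).div_const 2
    have heq : (fun t => (a t + b t + (a t - b t)) / 2) = a := by
      funext t; ring
    rw [heq] at this
    exact this
  · have := (hS.sub hAB).div_const 2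
    have heq : (fun t => (a t + b t - (a t - b t)) / 2) = b := by
      funext t; ring
    rw [heq] at this
    exact this
end
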